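/- arXiv:math/9811191 — 9 statements merged into one kernel-verified Lean document; each statement's English description precedes it below -/
import Mathlib

section
/- (Butler) Let f ∈ F_q[x] be a polynomial of degree d ≥ 1 and let R = F_q[x]/(f). Let F be the F_q-linear endomorphism of R induced by h ↦ h^q, and let R_1(F) = {h ∈ R : F(h) = h} be the fixed subspace of F. Then dim_{F_q} R_1(F) = k, where k is the number of distinct monic irreducible factors of f over F_q. -/
set_option maxHeartbeats 1000000

open Polynomial

private lemma butler_prod_eq (Fq : Type) [Field Fq] [Fintype Fq] (g : Polynomial Fq) :
    g ^ Fintype.card Fq - g = ∏ a : Fq, (g - Polynomial.C a) := by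
  classical
  have hq : 1 < Fintype.card Fq := Fintype.one_lt_card
  have h1 : (X ^ Fintype.card Fq - X : Fq[X]) = ∏ a : Fq, (X - C a) := by
    have hm : (X ^ Fintype.card Fq - X : Fq[X]).Monic := by
      refine (monic_X_pow _).sub_of_left ?_
      rw [degree_X_pow, degree_X]
      exact_mod_cast hq
    have hroots := FiniteField.roots_X_pow_card_sub_X Fq
    have hcard : Multiset.card (X ^ Fintype.card Fq - X : Fq[X]).roots
        = (X ^ Fintype.card Fq - X : Fq[X]).natDegree := by
      rw [hroots, FiniteField.X_pow_card_sub_X_natDegree_eq Fq hq]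
      simp [Finset.card_univ]
    have h2 := prod_multiset_X_sub_C_of_monic_of_roots_card_eq hm hcard
    rw [hroots] at h2
    rw [Finset.prod_eq_multiset_prod]
    exact h2.symm
  have h3 := congrArg (Polynomial.aeval g) h1
  simpa [map_prod, Polynomial.aeval_C, Polynomial.algebraMap_eq] using h3

private lemma butler_exists_const (Fq : Type) [Field Fq] [Fintype Fq]
    (p : Polynomial Fq) (hp : Prime p) (n : ℕ) (hn : 1 ≤ n)
    (y : Polynomial Fq ⧸ Ideal.span {p ^ n}) (hy : y ^ Fintype.card Fq = y) :
    ∃ c : Fq, Ideal.Quotient.mk (Ideal.span {p ^ n}) (Polynomial.C c) = y := by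
  classical
  obtain ⟨g, rfl⟩ := Ideal.Quotient.mk_surjective y
  have hdvd : p ^ n ∣ g ^ Fintype.card Fq - g := by
    rw [← Ideal.Quotient.eq_zero_iff_dvd, map_sub, map_pow, hy, sub_self]
  rw [butler_prod_eq] at hdvd
  have hpd : p ∣ ∏ a : Fq, (g - C a) :=
    (dvd_pow_self p (by omega : n ≠ 0)).trans hdvd
  obtain ⟨a, -, ha⟩ := hp.exists_mem_finset_dvd hpd
  refine ⟨a, ?_⟩
  have hrest : ¬ p ∣ ∏ b ∈ Finset.univ.erase a, (g - C b) := by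
    intro h
    obtain ⟨b, hb, hdb⟩ := hp.exists_mem_finset_dvd h
    have hba : b ≠ a := (Finset.mem_erase.mp hb).1
    have hdiff : p ∣ C (a - b) := by
      have h4 : (g - C b) - (g - C a) = C (a - b) := by
        rw [C_sub]; ring
      rw [← h4]
      exact dvd_sub hdb ha
    have hu : IsUnit (C (a - b) : Fq[X]) :=
      Polynomial.isUnit_C.mpr (isUnit_iff_ne_zero.mpr (sub_ne_zero.mpr (hba.symm)))
    exact hp.not_unit (isUnit_of_dvd_unit hdiff hu)
  have hfac : p ^ n ∣ g - C a := by
    refine hp.pow_dvd_of_dvd_mul_right n hrest ?_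
    rwa [← Finset.mul_prod_erase _ _ (Finset.mem_univ a)] at hdvd
  rw [Ideal.Quotient.eq, Ideal.mem_span_singleton]
  have h5 := hfac.neg_right
  rwa [neg_sub] at h5

/-- (Butler) For `f ∈ F_q[x]` of degree `d ≥ 1`, the fixed space of the `q`-th power
Frobenius `F` on `R = F_q[x]/(f)` has `F_q`-dimension equal to the number of distinct
monic irreducible factors of `f` over `F_q`. -/
theorem butler_fixed_space_dimension
    (Fq : Type) [Field Fq] [Fintype Fq]
    (f : Polynomial Fq) (d : ℕ) (hd : 1 ≤ d) (hdeg : f.natDegree = d)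
    (F : AdjoinRoot f →ₗ[Fq] AdjoinRoot f)
    (hF : ∀ y, F y = y ^ Fintype.card Fq) :
    Module.finrank Fq (LinearMap.ker (F - LinearMap.id)) =
      Nat.card {g : Polynomial Fq // g.Monic ∧ Irreducible g ∧ g ∣ f} := by
  classical
  have hf0 : f ≠ 0 := by
    intro h
    rw [h, Polynomial.natDegree_zero] at hdeg
    omega
  set nf := UniqueFactorizationMonoid.normalizedFactors f with hnf
  set s : Finset (Polynomial Fq) := nf.toFinset with hs
  -- the count of monic irreducible divisors is `s.card`
  have hiff : ∀ g : Polynomial Fq, g ∈ s ↔ g.Monic ∧ Irreducible g ∧ g ∣ f := by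
    intro g
    constructor
    · intro hg
      rw [hs, Multiset.mem_toFinset] at hg
      have hg0 : g ≠ 0 := fun h =>
        UniqueFactorizationMonoid.zero_notMem_normalizedFactors f (h ▸ hg)
      have hmon : g.Monic := by
        have h1 := UniqueFactorizationMonoid.normalize_normalized_factor g hg
        rw [← h1]
        exact Polynomial.monic_normalize hg0
      exact ⟨hmon, UniqueFactorizationMonoid.irreducible_of_normalized_factor g hg,
        UniqueFactorizationMonoid.dvd_of_mem_normalizedFactors hg⟩
    · rintro ⟨hm, hi, hdv⟩
      obtain ⟨q', hq', hassoc⟩ :=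
        UniqueFactorizationMonoid.exists_mem_normalizedFactors_of_dvd hf0 hi hdv
      have hq'0 : q' ≠ 0 := fun h =>
        UniqueFactorizationMonoid.zero_notMem_normalizedFactors f (h ▸ hq')
      have hq'mon : q'.Monic := by
        have h1 := UniqueFactorizationMonoid.normalize_normalized_factor q' hq'
        rw [← h1]
        exact Polynomial.monic_normalize hq'0
      rw [hs, Multiset.mem_toFinset]
      rwa [Polynomial.eq_of_monic_of_associated hm hq'mon hassoc]
  have hcount : Nat.card {g : Polynomial Fq // g.Monic ∧ Irreducible g ∧ g ∣ f} = s.card := by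
    rw [← Nat.card_congr (Equiv.subtypeEquivRight hiff)]
    simp [Nat.card_eq_fintype_card]
  rw [hcount]
  -- CRT setup
  set P : s → Polynomial Fq := fun i => (i : Polynomial Fq) ^ nf.count (i : Polynomial Fq)
    with hPdef
  have hprime : ∀ i : s, Prime (i : Polynomial Fq) := fun i =>
    UniqueFactorizationMonoid.prime_of_normalized_factor _ (Multiset.mem_toFinset.mp i.2)
  have hcnt : ∀ i : s, 1 ≤ nf.count (i : Polynomial Fq) := fun i =>
    Multiset.one_le_count_iff_mem.mpr (Multiset.mem_toFinset.mp i.2)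
  have hcop : ∀ (i j : s), i ≠ j → IsCoprime (P i) (P j) := by
    intro i j hij
    refine IsCoprime.pow ?_
    refine isCoprime_of_prime_dvd (fun h => (hprime i).ne_zero h.1) ?_
    intro z hz hzi hzj
    have h1 : Associated z (i : Polynomial Fq) :=
      hz.irreducible.associated_of_dvd (hprime i).irreducible hzi
    have h2 : Associated z (j : Polynomial Fq) :=
      hz.irreducible.associated_of_dvd (hprime j).irreducible hzj
    have h3 : Associated (i : Polynomial Fq) (j : Polynomial Fq) := h1.symm.trans h2
    have him : ((i : Polynomial Fq)).Monic := ((hiff _).mp i.2).1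
    have hjm : ((j : Polynomial Fq)).Monic := ((hiff _).mp j.2).1
    exact hij (Subtype.ext (Polynomial.eq_of_monic_of_associated him hjm h3))
  have hassocf : Associated (∏ i : s, P i) f := by
    have hprod : ∏ i : s, P i = nf.prod := by
      rw [hPdef, Finset.prod_coe_sort s (fun g => g ^ nf.count g)]
      exact (Finset.prod_multiset_count nf).symm
    rw [hprod]
    exact UniqueFactorizationMonoid.prod_normalizedFactors hf0
  have hdvdf : ∀ g : Polynomial Fq, (∀ i : s, P i ∣ g) → f ∣ g := by
    intro g hg
    have hp2 : ∏ i : s, P i ∣ g :=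
      Fintype.prod_dvd_of_coprime (fun i j hij => hcop i j hij) fun i => hg i
    exact hassocf.symm.dvd.trans hp2
  have hfdvd : ∀ i : s, P i ∣ f := fun i =>
    (Finset.dvd_prod_of_mem P (Finset.mem_univ i)).trans hassocf.dvd
  have hpair : Pairwise fun i j : s =>
      IsCoprime (Ideal.span ({P i} : Set (Polynomial Fq))) (Ideal.span {P j}) :=
    fun i j hij => (Ideal.isCoprime_span_singleton_iff _ _).mpr (hcop i j hij)
  -- the CRT ring isomorphism
  let Φ : Polynomial Fq →+* ∀ i : s, Polynomial Fq ⧸ Ideal.span {P i} :=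
    Pi.ringHom fun i => Ideal.Quotient.mk (Ideal.span {P i})
  let ψ : AdjoinRoot f →+* ∀ i : s, Polynomial Fq ⧸ Ideal.span {P i} :=
    Ideal.Quotient.lift (Ideal.span {f}) Φ (by
      intro g hg
      rw [Ideal.mem_span_singleton] at hg
      funext i
      show Ideal.Quotient.mk (Ideal.span {P i}) g = 0
      rw [Ideal.Quotient.eq_zero_iff_dvd]
      exact (hfdvd i).trans hg)
  have hψmk : ∀ g : Polynomial Fq,
      ψ (AdjoinRoot.mk f g) = fun i : s => Ideal.Quotient.mk (Ideal.span {P i}) g :=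
    fun g => rfl
  have hbij : Function.Bijective ψ := by
    constructor
    · rw [injective_iff_map_eq_zero]
      intro y hy
      obtain ⟨g, rfl⟩ := AdjoinRoot.mk_surjective y
      rw [hψmk] at hy
      have hfg : f ∣ g := by
        refine hdvdf g fun i => ?_
        have h2 := congrFun hy i
        simp only [Pi.zero_apply] at h2
        rwa [Ideal.Quotient.eq_zero_iff_dvd] at h2
      exact AdjoinRoot.mk_eq_zero.mpr hfg
    · intro z
      obtain ⟨r, hr⟩ := Ideal.pi_quotient_surjective hpair z
      exact ⟨AdjoinRoot.mk f r, by rw [hψmk]; funext i; exact hr i⟩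
  let e : AdjoinRoot f ≃+* ∀ i : s, Polynomial Fq ⧸ Ideal.span {P i} :=
    RingEquiv.ofBijective ψ hbij
  have hek : ∀ g : Polynomial Fq,
      e (AdjoinRoot.mk f g) = fun i : s => Ideal.Quotient.mk (Ideal.span {P i}) g :=
    fun g => hψmk g
  have heC : ∀ a : Fq,
      e.symm (fun i : s => Ideal.Quotient.mk (Ideal.span {P i}) (C a))
        = AdjoinRoot.mk f (C a) := by
    intro a
    rw [← hek (C a), RingEquiv.symm_apply_apply]
  -- the linear map from `s → Fq` onto the fixed space
  let φ : (s → Fq) →ₗ[Fq] AdjoinRoot f :=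
    { toFun := fun c => e.symm fun i => Ideal.Quotient.mk (Ideal.span {P i}) (C (c i))
      map_add' := by
        intro c c'
        rw [← map_add]
        congr 1
        funext i
        simp [C_add]
      map_smul' := by
        intro a c
        have h1 : (fun i : s => Ideal.Quotient.mk (Ideal.span {P i}) (C ((a • c) i)))
            = (fun i : s => Ideal.Quotient.mk (Ideal.span {P i}) (C a))
              * fun i : s => Ideal.Quotient.mk (Ideal.span {P i}) (C (c i)) := by
          funext i
          simp [Pi.smul_apply, smul_eq_mul, C_mul]
        rw [h1, map_mul, heC a, Algebra.smul_def]
        congr 1 }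
  have hφ : ∀ c : s → Fq,
      φ c = e.symm fun i => Ideal.Quotient.mk (Ideal.span {P i}) (C (c i)) := fun _ => rfl
  have hinj : Function.Injective φ := by
    rw [injective_iff_map_eq_zero]
    intro c hc
    have hz : (fun i : s => Ideal.Quotient.mk (Ideal.span {P i}) (C (c i)))
        = (0 : ∀ i : s, Polynomial Fq ⧸ Ideal.span {P i}) := by
      apply e.symm.injective
      rw [← hφ c, hc, map_zero]
    funext i
    have h0 : Ideal.Quotient.mk (Ideal.span {P i}) (C (c i)) = 0 := congrFun hz i
    rw [Ideal.Quotient.eq_zero_iff_dvd] at h0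
    by_contra hci
    have hu : IsUnit (C (c i) : Fq[X]) :=
      Polynomial.isUnit_C.mpr (isUnit_iff_ne_zero.mpr hci)
    have hup : IsUnit (P i) := isUnit_of_dvd_unit h0 hu
    have hui : IsUnit (i : Polynomial Fq) :=
      (isUnit_pow_iff (Nat.one_le_iff_ne_zero.mp (hcnt i))).mp hup
    exact (hprime i).not_unit hui
  have hrange : LinearMap.range φ = LinearMap.ker (F - LinearMap.id) := by
    ext y
    simp only [LinearMap.mem_range, LinearMap.mem_ker, LinearMap.sub_apply,
      LinearMap.id_apply, sub_eq_zero, hF]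
    constructor
    · rintro ⟨c, rfl⟩
      rw [hφ c, ← map_pow]
      congr 1
      funext i
      rw [Pi.pow_apply, ← map_pow, ← map_pow, FiniteField.pow_card]
    · intro hy
      have hz : ∀ i : s, (e y i) ^ Fintype.card Fq = e y i := by
        intro i
        have h1 : e y ^ Fintype.card Fq = e y := by rw [← map_pow, hy]
        calc (e y i) ^ Fintype.card Fq = (e y ^ Fintype.card Fq) i := rfl
          _ = e y i := by rw [h1]
      choose c hc using fun i : s =>
        butler_exists_const Fq (i : Polynomial Fq) (hprime i) _ (hcnt i) (e y i) (hz i)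
      refine ⟨c, ?_⟩
      rw [hφ c]
      have h2 : (fun i : s => Ideal.Quotient.mk (Ideal.span {P i}) (C (c i))) = e y :=
        funext fun i => hc i
      rw [h2, RingEquiv.symm_apply_apply]
  rw [← hrange, LinearMap.finrank_range_of_inj hinj, Module.finrank_pi, Fintype.card_coe]
end

section
/- For every positive integer d, the d × d matrix A over ℚ whose (i,j) entry is gcd(i, j) for 1 ≤ i, j ≤ d is invertible. -/
lemma totient_sum_aux (d g : ℕ) (hg : 0 < g) (hgd : g ≤ d) :
    ∑ j : Fin d, (if (j.1 + 1) ∣ g then ((Nat.totient (j.1 + 1) : ℕ) : ℚ) else 0) = g := by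
  have h1 : ∑ j : Fin d, (if (j.1 + 1) ∣ g then ((Nat.totient (j.1 + 1) : ℕ) : ℚ) else 0)
      = ∑ n ∈ Finset.range d, (if (n + 1) ∣ g then ((Nat.totient (n + 1) : ℕ) : ℚ) else 0) :=
    Fin.sum_univ_eq_sum_range (fun n => if (n + 1) ∣ g then ((Nat.totient (n + 1) : ℕ) : ℚ) else 0) d
  have h2 : ∑ n ∈ Finset.range d, (if (n + 1) ∣ g then ((Nat.totient (n + 1) : ℕ) : ℚ) else 0)
      = ∑ m ∈ Finset.Ico 1 (d + 1), (if m ∣ g then ((Nat.totient m : ℕ) : ℚ) else 0) := by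
    rw [Finset.sum_Ico_eq_sum_range]
    simp [add_comm]
  have hsub : g.divisors ⊆ Finset.Ico 1 (d + 1) := by
    intro m hm
    rw [Finset.mem_Ico]
    exact ⟨Nat.pos_of_mem_divisors hm,
      Nat.lt_succ_of_le (le_trans (Nat.le_of_dvd hg (Nat.mem_divisors.1 hm).1) hgd)⟩
  have h3 : ∑ m ∈ Finset.Ico 1 (d + 1), (if m ∣ g then ((Nat.totient m : ℕ) : ℚ) else 0)
      = ∑ m ∈ g.divisors, ((Nat.totient m : ℕ) : ℚ) := by
    rw [← Finset.sum_subset hsub (fun m _ hnm => by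
      have : ¬ m ∣ g := fun h => hnm (Nat.mem_divisors.2 ⟨h, hg.ne'⟩)
      simp [this])]
    exact Finset.sum_congr rfl fun m hm => by simp [(Nat.mem_divisors.1 hm).1]
  rw [h1, h2, h3]
  rw [← Nat.cast_sum]
  rw [Nat.sum_totient]

/-- The `d × d` matrix over `ℚ` whose `(i,j)` entry is `gcd(i,j)` (for `1 ≤ i, j ≤ d`)
is invertible. -/
theorem gcd_matrix_invertible (d : ℕ) (hd : 0 < d) :
    IsUnit (Matrix.of fun i j : Fin d => ((Nat.gcd (i.1 + 1) (j.1 + 1) : ℕ) : ℚ)) := by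
  set M : Matrix (Fin d) (Fin d) ℚ :=
    Matrix.of fun i j : Fin d => if (j.1 + 1) ∣ (i.1 + 1) then ((Nat.totient (j.1 + 1) : ℕ) : ℚ) else 0 with hM
  set N : Matrix (Fin d) (Fin d) ℚ :=
    Matrix.of fun i j : Fin d => if (i.1 + 1) ∣ (j.1 + 1) then (1 : ℚ) else 0 with hN
  have key : (Matrix.of fun i j : Fin d => ((Nat.gcd (i.1 + 1) (j.1 + 1) : ℕ) : ℚ)) = M * N := by
    ext i j
    simp only [Matrix.mul_apply, hM, hN, Matrix.of_apply]
    have : ∀ k : Fin d,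
        (if (k.1 + 1) ∣ (i.1 + 1) then ((Nat.totient (k.1 + 1) : ℕ) : ℚ) else 0) *
          (if (k.1 + 1) ∣ (j.1 + 1) then (1 : ℚ) else 0)
        = (if (k.1 + 1) ∣ Nat.gcd (i.1 + 1) (j.1 + 1) then ((Nat.totient (k.1 + 1) : ℕ) : ℚ) else 0) := by
      intro k
      by_cases h1 : (k.1 + 1) ∣ (i.1 + 1) <;> by_cases h2 : (k.1 + 1) ∣ (j.1 + 1) <;>
        simp [h1, h2, Nat.dvd_gcd_iff]
    rw [Finset.sum_congr rfl (fun k _ => this k)]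
    exact (totient_sum_aux d (Nat.gcd (i.1 + 1) (j.1 + 1))
      (Nat.gcd_pos_of_pos_left _ (Nat.succ_pos _))
      (le_trans (Nat.gcd_le_left _ (Nat.succ_pos _)) (Nat.succ_le_of_lt i.2))).symm
  rw [key]
  have hMdet : M.det ≠ 0 := by
    have hlow : M.BlockTriangular OrderDual.toDual := by
      intro i j h
      simp only [OrderDual.toDual_lt_toDual] at h
      have : ¬ (j.1 + 1) ∣ (i.1 + 1) := fun hdvd => by
        have := Nat.le_of_dvd (Nat.succ_pos _) hdvd
        omega
      simp [hM, this]
    rw [Matrix.det_of_lowerTriangular M hlow]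
    apply Finset.prod_ne_zero_iff.2
    intro i _
    simp only [hM, Matrix.of_apply, dvd_refl, if_true]
    exact_mod_cast (Nat.totient_pos.2 (Nat.succ_pos _)).ne'
  have hNdet : N.det ≠ 0 := by
    have hup : N.BlockTriangular id := by
      intro i j h
      simp only [id] at h
      have : ¬ (i.1 + 1) ∣ (j.1 + 1) := fun hdvd => by
        have := Nat.le_of_dvd (Nat.succ_pos _) hdvd
        have : (j : ℕ) < i := h
        omega
      simp [hN, this]
    rw [Matrix.det_of_upperTriangular hup]
    simp [hN]
  exact (Matrix.isUnit_iff_isUnit_det _).2 (by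
    rw [Matrix.det_mul]
    exact (isUnit_iff_ne_zero).2 (mul_ne_zero hMdet hNdet))
end

section
/- (Berlekamp splitting) Let f ∈ F_q[x] be a monic polynomial of degree d ≥ 1 and let h ∈ F_q[x] satisfy f | h^q − h. Then f = ∏_{c ∈ F_q} gcd(f, h − c), where gcd denotes the monic greatest common divisor in F_q[x] and the product runs over all elements c of F_q. -/
open Polynomial

/-- gcd distributes over a product of two coprime elements. -/
theorem gcd_mul_of_coprime {α : Type*} [CommRing α] [IsDomain α]
    [StrongNormalizedGCDMonoid α] {a b c : α} (hbc : IsCoprime b c) :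
    gcd a (b * c) = gcd a b * gcd a c := by
  apply dvd_antisymm_of_normalize_eq (normalize_gcd _ _)
  · rw [normalize_mul, normalize_gcd, normalize_gcd]
  · exact gcd_mul_dvd_mul_gcd a b c
  · refine dvd_gcd ?_ (mul_dvd_mul (gcd_dvd_right a b) (gcd_dvd_right a c))
    exact (hbc.of_isCoprime_of_dvd_left (gcd_dvd_right a b)).of_isCoprime_of_dvd_right
      (gcd_dvd_right a c) |>.mul_dvd (gcd_dvd_left a b) (gcd_dvd_left a c)

theorem gcd_prod_of_pairwise_coprime {α ι : Type*} [CommRing α] [IsDomain α]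
    [StrongNormalizedGCDMonoid α] (a : α) (s : Finset ι) (b : ι → α)
    (hcop : Set.Pairwise (s : Set ι) (Function.onFun IsCoprime b)) :
    gcd a (∏ i ∈ s, b i) = ∏ i ∈ s, gcd a (b i) := by
  induction s using Finset.cons_induction with
  | empty => simp
  | cons i s his ih =>
    rw [Finset.prod_cons, Finset.prod_cons,
      gcd_mul_of_coprime (IsCoprime.prod_right fun j hj =>
        hcop (Finset.mem_cons_self i s) (Finset.mem_cons_of_mem hj)
          (fun e => his (e ▸ hj))),
      ih (hcop.mono (Finset.coe_subset.2 (Finset.subset_cons _)))]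

/-- (Berlekamp splitting) If `f ∈ F_q[x]` is monic of degree `d ≥ 1` and `h ∈ F_q[x]`
satisfies `f ∣ h^q - h`, then `f = ∏_{c ∈ F_q} gcd(f, h - c)`, the gcd being the monic
(normalized) greatest common divisor. -/
theorem berlekamp_splitting
    (Fq : Type) [Field Fq] [Fintype Fq] [DecidableEq Fq]
    (f : Polynomial Fq) (hmonic : f.Monic) (hd : 1 ≤ f.natDegree)
    (h : Polynomial Fq) (hdvd : f ∣ h ^ Fintype.card Fq - h) :
    f = ∏ c : Fq, gcd f (h - Polynomial.C c) := by
  classical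
  set q := Fintype.card Fq
  -- Step 1: X^q - X = ∏ c, (X - C c)
  have hXq : (X ^ q - X : Polynomial Fq) = ∏ c : Fq, (X - C c) := by
    have hne : (X ^ q - X : Polynomial Fq) ≠ 0 :=
      FiniteField.X_pow_card_sub_X_ne_zero _ Fintype.one_lt_card
    have hroots : (X ^ q - X : Polynomial Fq).roots = Finset.univ.val :=
      FiniteField.roots_X_pow_card_sub_X Fq
    have hdvd' : (∏ c : Fq, (X - C c)) ∣ (X ^ q - X : Polynomial Fq) := by
      have := prod_multiset_X_sub_C_dvd (X ^ q - X : Polynomial Fq)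
      rw [hroots] at this
      rw [Finset.prod_eq_multiset_prod]
      exact this
    have hm1 : (∏ c : Fq, (X - C c) : Polynomial Fq).Monic :=
      monic_prod_of_monic _ _ fun c _ => monic_X_sub_C c
    have hm2 : (X ^ q - X : Polynomial Fq).Monic := by
      have : 1 < q := Fintype.one_lt_card
      simpa using (monic_X_pow q).sub_of_left (by
        rw [degree_X_pow]
        exact lt_of_le_of_lt (degree_X_le) (by exact_mod_cast this))
    symm
    apply eq_of_monic_of_associated hm1 hm2
    obtain ⟨g, hg⟩ := hdvd'
    have hgne : g ≠ 0 := fun h0 => hne (by rw [hg, h0, mul_zero])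
    have hdeg : (∏ c : Fq, (X - C c) : Polynomial Fq).natDegree = q := by
      rw [natDegree_prod _ _ fun c _ => X_sub_C_ne_zero c]
      simp [q]
    have hdegX : (X ^ q - X : Polynomial Fq).natDegree = q :=
      FiniteField.X_pow_card_sub_X_natDegree_eq _ Fintype.one_lt_card
    have hgdeg : g.natDegree = 0 := by
      have := natDegree_mul (hm1.ne_zero) hgne
      rw [← hg, hdegX, hdeg] at this
      omega
    have hg1 : g = 1 := by
      have hgm : g.Monic := hm1.of_mul_monic_left (hg ▸ hm2)
      exact hgm.natDegree_eq_zero.mp hgdeg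
    exact ⟨1, by rw [hg, hg1]; simp⟩
  -- Step 2: h^q - h = ∏ c, (h - C c), via aeval h
  have hprod : h ^ q - h = ∏ c : Fq, (h - C c) := by
    have := congrArg (aeval h) hXq
    simpa using this
  -- Step 3: pairwise coprime
  have hcop : Set.Pairwise (Finset.univ : Finset Fq) (Function.onFun IsCoprime fun c => h - C c) := by
    intro c _ c' _ hne
    refine ⟨C ((c' - c)⁻¹), -C ((c' - c)⁻¹), ?_⟩
    have hsub : (c' - c) ≠ 0 := sub_ne_zero.mpr (Ne.symm hne)
    rw [neg_mul, ← sub_eq_add_neg, ← mul_sub]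
    have : (h - C c) - (h - C c') = C (c' - c) := by rw [C_sub]; ring
    rw [this, ← C_mul, inv_mul_cancel₀ hsub, C_1]
  -- Step 4: conclude
  calc f = gcd f (h ^ q - h) :=
        ((gcd_eq_left_iff f _ hmonic.normalize_eq_self).2 hdvd).symm
    _ = gcd f (∏ c : Fq, (h - C c)) := by rw [hprod]
    _ = ∏ c : Fq, gcd f (h - C c) := gcd_prod_of_pairwise_coprime f _ _ hcop
end

section
/- Let f ∈ F_q[x] be a polynomial of degree d ≥ 1. Let ψ_q be the F_q-linear map on F_q[x] determined by ψ_q(x^u) = x^{u/q} if q | u and 0 otherwise, and let H^{(q-1)} be the (q−1)-th Hasse derivative on F_q[x]. Then the ideal (f) of F_q[x] is stable under the operator D defined by D(h) = ψ_q(H^{(q-1)}(f^{q-1}·h)): that is, for every h ∈ F_q[x], if f divides h then f divides ψ_q(H^{(q-1)}(f^{q-1}·h)). -/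
open Polynomial

/-- Lucas-type vanishing: if `q = card Fq` divides `m` but not `i`, then
`(m.choose i : Fq) = 0`. -/
lemma choose_cast_eq_zero (Fq : Type) [Field Fq] [Fintype Fq]
    (m i : ℕ) (hm : Fintype.card Fq ∣ m) (hi : ¬ Fintype.card Fq ∣ i) :
    ((m.choose i : Fq) = 0) := by
  set q := Fintype.card Fq with hq
  have hq0 : 0 < q := Fintype.card_pos
  obtain ⟨s, rfl⟩ := hm
  have key : ((X + 1 : Fq[X]) ^ (q * s)) = expand Fq q ((X + 1) ^ s) := by
    rw [pow_mul, ← FiniteField.expand_card ((X : Fq[X]) + 1), ← map_pow]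
  have h2 : ((q * s).choose i : Fq) = (expand Fq q ((X + 1) ^ s)).coeff i := by
    rw [← key, coeff_X_add_one_pow]
  rw [h2, coeff_expand hq0, if_neg hi]

lemma hasseDeriv_expand_eq_zero (Fq : Type) [Field Fq] [Fintype Fq]
    (φ : Polynomial Fq) (i : ℕ) (hi : ¬ Fintype.card Fq ∣ i) :
    Polynomial.hasseDeriv i (expand Fq (Fintype.card Fq) φ) = 0 := by
  set q := Fintype.card Fq with hq
  have hq0 : 0 < q := Fintype.card_pos
  ext n
  rw [hasseDeriv_coeff, coeff_expand hq0, coeff_zero]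
  by_cases hd : q ∣ n + i
  · rw [choose_cast_eq_zero Fq _ _ hd hi, zero_mul]
  · simp [hd]

lemma psi_expand_mul (Fq : Type) [Field Fq] [Fintype Fq]
    (ψ : Polynomial Fq →ₗ[Fq] Polynomial Fq)
    (hψ : ∀ (g : Polynomial Fq) (n : ℕ),
      (ψ g).coeff n = g.coeff (Fintype.card Fq * n))
    (φ a : Polynomial Fq) :
    ψ (expand Fq (Fintype.card Fq) φ * a) = φ * ψ a := by
  set q := Fintype.card Fq with hq
  have hq0 : 0 < q := Fintype.card_pos
  induction φ using Polynomial.induction_on' with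
  | add p r hp hr =>
      rw [map_add, add_mul, map_add, hp, hr, add_mul]
  | monomial u c =>
      ext n
      rw [hψ, expand_monomial]
      have hrw : ∀ (b : Polynomial Fq) (v m : ℕ),
          ((monomial v c : Fq[X]) * b).coeff m
            = if v ≤ m then c * b.coeff (m - v) else 0 := by
        intro b v m
        rw [← C_mul_X_pow_eq_monomial, mul_assoc, coeff_C_mul, X_pow_mul, coeff_mul_X_pow']
        split <;> simp
      rw [hrw, hrw]
      by_cases hun : u ≤ n
      · have h1 : u * q ≤ q * n := by
          rw [mul_comm]
          exact Nat.mul_le_mul_left q hun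
        rw [if_pos h1, if_pos hun, hψ]
        congr 1
        have : q * n - u * q = q * (n - u) := by
          rw [mul_comm u q, ← Nat.mul_sub]
        rw [this]
      · have h1 : ¬ u * q ≤ q * n := by
          intro hc
          exact hun (Nat.le_of_mul_le_mul_right (by rwa [mul_comm q n] at hc) hq0)
        rw [if_neg h1, if_neg hun]

/-- For `f ∈ F_q[x]` of degree `d ≥ 1`, the ideal `(f)` is stable under the operator
`D(h) = ψ_q(H^{(q-1)}(f^{q-1}·h))`, where `ψ_q` satisfies `(ψ_q g).coeff n = g.coeff (q·n)`
and `H^{(q-1)}` is the `(q-1)`-th Hasse derivative. -/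
theorem ideal_stable_under_D
    (Fq : Type) [Field Fq] [Fintype Fq]
    (ψ : Polynomial Fq →ₗ[Fq] Polynomial Fq)
    (hψ : ∀ (g : Polynomial Fq) (n : ℕ),
      (ψ g).coeff n = g.coeff (Fintype.card Fq * n))
    (f : Polynomial Fq) (hd : 1 ≤ f.natDegree)
    (h : Polynomial Fq) (hfh : f ∣ h) :
    f ∣ ψ (Polynomial.hasseDeriv (Fintype.card Fq - 1)
      (f ^ (Fintype.card Fq - 1) * h)) := by
  set q := Fintype.card Fq with hq
  have hq1 : 1 ≤ q := Fintype.card_pos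
  obtain ⟨g, rfl⟩ := hfh
  have hstep : f ^ (q - 1) * (f * g) = expand Fq q f * g := by
    rw [FiniteField.expand_card, ← hq, ← mul_assoc, ← pow_succ, Nat.sub_add_cancel hq1]
  rw [hstep]
  have hleib : Polynomial.hasseDeriv (q - 1) (expand Fq q f * g)
      = expand Fq q f * Polynomial.hasseDeriv (q - 1) g := by
    rw [hasseDeriv_mul]
    rw [Finset.sum_eq_single (0, q - 1)]
    · simp [hasseDeriv_zero']
    · rintro ⟨i, j⟩ hij hne
      rw [Finset.HasAntidiagonal.mem_antidiagonal] at hij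
      have hi0 : i ≠ 0 := by
        rintro rfl
        exact hne (by rw [Prod.mk.injEq]; exact ⟨rfl, by omega⟩)
      have hndvd : ¬ q ∣ i := by
        intro hc
        have := Nat.le_of_dvd (Nat.pos_of_ne_zero hi0) hc
        omega
      rw [hasseDeriv_expand_eq_zero Fq f i hndvd, zero_mul]
    · intro hc
      exact absurd (by simp) hc
  rw [hleib, psi_expand_mul Fq ψ hψ]
  exact Dvd.intro _ rfl
end

section
/- Let f ∈ F_q[x] be a polynomial of degree d ≥ 1 with factorization f = ∏_{i=1}^{k} f_i^{a_i} into powers of distinct monic irreducible polynomials f_i, and let R = F_q[x]/(f). Let D be the F_q-linear endomorphism of R induced by h ↦ ψ_q(H^{(q-1)}(f^{q-1}·h)). Then the images in R of the k polynomials f_i′(x)·(f(x)/f_i(x)) for 1 ≤ i ≤ k (where f_i′ is the derivative of f_i) form an F_q-basis of the fixed space R_1(D) = {h ∈ R : D(h) = h}. -/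
open Polynomial

namespace NiederAux

variable {Fq : Type} [Field Fq] [Fintype Fq]

/-- WithBot degree helper: if `degree p ≤ m` and `degree r < n` then
`degree (p * r) < m + n`. -/
lemma degree_mul_lt_aux {p r : Fq[X]} {m n : ℕ}
    (hp : degree p ≤ (m : ℕ)) (hr : degree r < (n : ℕ)) :
    degree (p * r) < ((m + n : ℕ) : WithBot ℕ) := by
  rcases eq_or_ne (p * r) 0 with h0 | h0
  · rw [h0, degree_zero]; exact WithBot.bot_lt_coe _
  · have hp0 : p ≠ 0 := fun h => h0 (by rw [h, zero_mul])
    have hr0 : r ≠ 0 := fun h => h0 (by rw [h, mul_zero])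
    rw [degree_eq_natDegree h0]
    rw [degree_eq_natDegree hp0] at hp
    rw [degree_eq_natDegree hr0] at hr
    have h1 : natDegree p ≤ m := by exact_mod_cast hp
    have h2 : natDegree r < n := by exact_mod_cast hr
    have h3 : natDegree (p * r) = natDegree p + natDegree r := natDegree_mul hp0 hr0
    rw [h3]
    exact_mod_cast (by omega : natDegree p + natDegree r < m + n)

lemma card_pos' : 0 < Fintype.card Fq := Fintype.card_pos

lemma two_le_card : 2 ≤ Fintype.card Fq := Fintype.one_lt_card

lemma pred_mul_add (q n : ℕ) (hq : 0 < q) : (q - 1) * n + n = q * n := by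
  cases q with
  | zero => omega
  | succ m => simp [Nat.succ_sub_one, Nat.succ_mul]

/-- The key binomial identity: `C(q*m + (q-1), q-1) = 1` in `Fq`. -/
lemma choose_cast_eq_one (m : ℕ) :
    (((Fintype.card Fq * m + (Fintype.card Fq - 1)).choose (Fintype.card Fq - 1) : ℕ) : Fq)
      = 1 := by
  set q := Fintype.card Fq with hq
  have hq0 : 0 < q := card_pos'
  -- consider the coefficient of X^(q-1) in (X+1)^(q*m + (q-1))
  have key : ((X + 1 : Fq[X]) ^ (q * m + (q - 1))).coeff (q - 1)
      = ((q * m + (q - 1)).choose (q - 1) : Fq) := coeff_X_add_one_pow Fq _ _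
  have expand_eq : ((X + 1 : Fq[X]) ^ (q * m + (q - 1)))
      = expand Fq q ((X + 1) ^ m) * (X + 1) ^ (q - 1) := by
    rw [FiniteField.expand_card, ← pow_mul, ← pow_add, mul_comm m q]
  have coeff_eq : (expand Fq q ((X + 1 : Fq[X]) ^ m) * (X + 1) ^ (q - 1)).coeff (q - 1) = 1 := by
    rw [coeff_mul]
    rw [Finset.sum_eq_single ((0 : ℕ), q - 1)]
    · simp only [coeff_expand hq0]
      have h0 : (q : ℕ) ∣ 0 := dvd_zero q
      rw [if_pos h0]
      have : ((X + 1 : Fq[X]) ^ m).coeff (0 / q) = 1 := by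
        rw [Nat.zero_div]
        have := Polynomial.coeff_zero_eq_eval_zero ((X + 1 : Fq[X]) ^ m)
        rw [this]
        simp
      rw [this, one_mul, coeff_X_add_one_pow, Nat.choose_self, Nat.cast_one]
    · rintro ⟨i, j⟩ hmem hne
      rw [Finset.HasAntidiagonal.mem_antidiagonal] at hmem
      rcases Nat.eq_zero_or_pos i with hi | hi
      · exfalso; apply hne; subst hi; simp at hmem ⊢; omega
      · have hiq : ¬ (q ∣ i) := by
          intro hdvd
          have : q ≤ i := Nat.le_of_dvd hi hdvd
          omega
        rw [coeff_expand hq0, if_neg hiq, zero_mul]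
    · intro habs
      exfalso
      apply habs
      simp
  rw [expand_eq, coeff_eq] at key
  exact key.symm

section Nop

variable (ψ : Polynomial Fq →ₗ[Fq] Polynomial Fq)

/-- The Niederreiter operator. -/
noncomputable def Nop (u : Fq[X]) : Fq[X] :=
  ψ (Polynomial.hasseDeriv (Fintype.card Fq - 1) u)

variable (hψ : ∀ (g : Polynomial Fq) (n : ℕ),
    (ψ g).coeff n = g.coeff (Fintype.card Fq * n))

lemma Nop_add (u v : Fq[X]) : Nop ψ (u + v) = Nop ψ u + Nop ψ v := by
  unfold Nop; rw [map_add, map_add]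

lemma Nop_sub (u v : Fq[X]) : Nop ψ (u - v) = Nop ψ u - Nop ψ v := by
  unfold Nop; rw [map_sub, map_sub]

lemma Nop_smul (c : Fq) (u : Fq[X]) : Nop ψ (c • u) = c • Nop ψ u := by
  unfold Nop; rw [map_smul, map_smul]

include hψ in
lemma coeff_Nop (u : Fq[X]) (n : ℕ) :
    (Nop ψ u).coeff n = u.coeff (Fintype.card Fq * n + (Fintype.card Fq - 1)) := by
  unfold Nop
  rw [hψ, hasseDeriv_coeff, choose_cast_eq_one, one_mul]

include hψ in
/-- Multiply by `X^(q*j)` commutes with `Nop` turning into `X^j`. -/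
lemma Nop_X_pow_mul (j : ℕ) (u : Fq[X]) :
    Nop ψ (X ^ (Fintype.card Fq * j) * u) = X ^ j * Nop ψ u := by
  have hq0 : 0 < Fintype.card Fq := card_pos'
  ext n
  rw [coeff_Nop ψ hψ, X_pow_mul, coeff_mul_X_pow', X_pow_mul, coeff_mul_X_pow']
  by_cases hjn : j ≤ n
  · obtain ⟨t, rfl⟩ := Nat.le.dest hjn
    have e2 : Fintype.card Fq * (j + t) = Fintype.card Fq * j + Fintype.card Fq * t := by
      ring
    have e1 : j + t - j = t := by omega
    have hle : Fintype.card Fq * j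
        ≤ Fintype.card Fq * (j + t) + (Fintype.card Fq - 1) := by
      rw [e2]; omega
    rw [if_pos hle, if_pos hjn, coeff_Nop ψ hψ, e1, e2]
    congr 1
    omega
  · have hgt : ¬ (Fintype.card Fq * j ≤ Fintype.card Fq * n + (Fintype.card Fq - 1)) := by
      intro hle
      apply hjn
      by_contra hc
      have hnj : n + 1 ≤ j := by omega
      have h3 : Fintype.card Fq * (n + 1) ≤ Fintype.card Fq * j :=
        Nat.mul_le_mul_left _ hnj
      have h4 : Fintype.card Fq * (n + 1) = Fintype.card Fq * n + Fintype.card Fq := by ring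
      omega
    rw [if_neg hgt, if_neg hjn]

include hψ in
/-- F1 : `Nop (g^q * u) = g * Nop u`. -/
lemma Nop_pow_card_mul (g u : Fq[X]) :
    Nop ψ (g ^ (Fintype.card Fq) * u) = g * Nop ψ u := by
  induction g using Polynomial.induction_on' with
  | add p r hp hr =>
    have hexp : (p + r) ^ (Fintype.card Fq)
        = p ^ (Fintype.card Fq) + r ^ (Fintype.card Fq) := by
      rw [← FiniteField.expand_card, ← FiniteField.expand_card, ← FiniteField.expand_card,
        map_add]
    rw [hexp, add_mul, Nop_add, hp, hr, add_mul]
  | monomial n c =>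
    rw [monomial_pow, FiniteField.pow_card]
    rw [← C_mul_X_pow_eq_monomial, ← C_mul_X_pow_eq_monomial]
    have h1 : C c * X ^ (n * Fintype.card Fq) * u
        = c • (X ^ (Fintype.card Fq * n) * u) := by
      rw [smul_eq_C_mul, mul_comm n (Fintype.card Fq)]; ring
    rw [h1, Nop_smul, Nop_X_pow_mul ψ hψ, smul_eq_C_mul]; ring

/-- Char-0 identity used to prove F2. -/
lemma coeff_pow_mul_derivative_charzero {R : Type} [CommRing R] [IsDomain R] [CharZero R]
    (G : R[X]) (Q m : ℕ) (hQ : 0 < Q) (hm : 0 < m) :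
    (G ^ (Q - 1) * derivative G).coeff (Q * m - 1) = (m : R) * (G ^ Q).coeff (Q * m) := by
  have hQm : 1 ≤ Q * m := Nat.one_le_iff_ne_zero.mpr (by positivity)
  have h2 : (derivative (G ^ Q)).coeff (Q * m - 1)
      = (Q : R) * (G ^ (Q - 1) * derivative G).coeff (Q * m - 1) := by
    rw [derivative_pow, mul_assoc, coeff_C_mul]
  have h1 : (derivative (G ^ Q)).coeff (Q * m - 1)
      = (G ^ Q).coeff (Q * m) * ((Q : R) * (m : R)) := by
    rw [coeff_derivative]
    have e : Q * m - 1 + 1 = Q * m := by omega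
    rw [e]
    congr 1
    rw [Nat.cast_sub hQm]
    push_cast
    ring
  apply mul_left_cancel₀ (show (Q : R) ≠ 0 from Nat.cast_ne_zero.mpr (by omega))
  rw [← h2, h1]
  ring

/-- F2 transfer to `Fq`. -/
lemma coeff_pow_mul_derivative (g : Fq[X]) (Q m : ℕ) (hQ : 0 < Q) (hm : 0 < m) :
    (g ^ (Q - 1) * derivative g).coeff (Q * m - 1) = (m : Fq) * (g ^ Q).coeff (Q * m) := by
  classical
  set A := MvPolynomial Fq ℤ
  let φ : A →+* Fq := (MvPolynomial.aeval (id : Fq → Fq) : A →ₐ[ℤ] Fq).toRingHom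
  set G : A[X] := g.sum (fun i c => Polynomial.C (MvPolynomial.X c) * Polynomial.X ^ i) with hG
  have hmap : G.map φ = g := by
    rw [hG, Polynomial.sum_def]
    rw [Polynomial.map_sum]
    have : ∀ i ∈ g.support,
        (Polynomial.C (MvPolynomial.X (g.coeff i) : A) * Polynomial.X ^ i).map φ
          = Polynomial.C (g.coeff i) * Polynomial.X ^ i := by
      intro i _
      rw [Polynomial.map_mul, Polynomial.map_C, Polynomial.map_pow, Polynomial.map_X]
      congr 2
      show (MvPolynomial.aeval (id : Fq → Fq)) (MvPolynomial.X (g.coeff i)) = g.coeff i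
      rw [MvPolynomial.aeval_X]
      rfl
    rw [Finset.sum_congr rfl this]
    conv_rhs => rw [← Polynomial.sum_C_mul_X_pow_eq g]
    rw [Polynomial.sum_def]
  have key := coeff_pow_mul_derivative_charzero G Q m hQ hm
  have lhs : (g ^ (Q - 1) * derivative g).coeff (Q * m - 1)
      = φ ((G ^ (Q - 1) * derivative G).coeff (Q * m - 1)) := by
    conv_lhs => rw [← hmap]
    rw [derivative_map, ← Polynomial.map_pow, ← Polynomial.map_mul, Polynomial.coeff_map]
  have rhs : (m : Fq) * (g ^ Q).coeff (Q * m)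
      = φ ((m : A) * (G ^ Q).coeff (Q * m)) := by
    rw [map_mul, map_natCast, ← hmap, ← Polynomial.map_pow, Polynomial.coeff_map]
  rw [lhs, key, ← rhs]

include hψ in
/-- F2 : `Nop (g^(q-1) * g') = g'`. -/
lemma Nop_pow_mul_derivative (g : Fq[X]) :
    Nop ψ (g ^ (Fintype.card Fq - 1) * derivative g) = derivative g := by
  set q := Fintype.card Fq with hqdef
  have hq0 : 0 < q := card_pos'
  ext n
  rw [coeff_Nop ψ hψ]
  have harith : q * n + (q - 1) = q * (n + 1) - 1 := by
    have : q * (n + 1) = q * n + q := by ring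
    omega
  rw [harith, coeff_pow_mul_derivative g q (n + 1) hq0 (Nat.succ_pos n)]
  have hexp : (g ^ q).coeff (q * (n + 1)) = g.coeff (n + 1) := by
    rw [← FiniteField.expand_card, coeff_expand_mul' hq0]
  rw [hexp, coeff_derivative]
  push_cast
  ring

include hψ in
/-- Degree bound for `Nop`. -/
lemma degree_Nop_lt (u : Fq[X]) (M : ℕ)
    (hu : degree u < ((Fintype.card Fq * M : ℕ) : WithBot ℕ)) :
    degree (Nop ψ u) < (M : WithBot ℕ) := by
  set q := Fintype.card Fq with hqdef
  rw [degree_lt_iff_coeff_zero]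
  intro m hm
  have hm' : M ≤ m := by exact_mod_cast hm
  rw [coeff_Nop ψ hψ]
  apply coeff_eq_zero_of_degree_lt
  refine lt_of_lt_of_le hu ?_
  have : q * M ≤ q * m + (q - 1) := by
    have := Nat.mul_le_mul_left q hm'
    omega
  exact_mod_cast this

end Nop

lemma derivative_ne_zero_of_irreducible {g : Fq[X]} (hirr : Irreducible g) :
    derivative g ≠ 0 := by
  intro h0
  have hsep : g.Separable := PerfectField.separable_of_irreducible hirr
  rw [Polynomial.Separable, h0] at hsep
  exact hirr.not_isUnit (isCoprime_zero_right.mp hsep)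

lemma not_dvd_derivative_of_irreducible {g : Fq[X]} (hirr : Irreducible g) (hg : g ≠ 0) :
    ¬ g ∣ derivative g := by
  intro hdvd
  exact derivative_ne_zero_of_irreducible hirr
    (Polynomial.eq_zero_of_dvd_of_degree_lt hdvd (degree_derivative_lt hg))

lemma not_dvd_of_ne {p r : Fq[X]} (hp : Irreducible p) (hr : Irreducible r)
    (hpm : p.Monic) (hrm : r.Monic) (hne : p ≠ r) : ¬ p ∣ r := by
  intro hdvd
  exact hne (Polynomial.eq_of_monic_of_associated hpm hrm (hp.associated_of_dvd hr hdvd))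

/-- An element of an `Fq`-algebra field fixed by `x ↦ x^q` comes from `Fq`. -/
lemma exists_of_pow_card_eq {K : Type} [Field K] [Algebra Fq K] (z : K)
    (hz : z ^ (Fintype.card Fq) = z) : ∃ c : Fq, algebraMap Fq K c = z := by
  classical
  set q := Fintype.card Fq with hqdef
  have hq2 : 2 ≤ q := two_le_card
  by_contra hc
  push_neg at hc
  set P : K[X] := X ^ q - X with hP
  have hdegP : degree P = (q : ℕ) := by
    rw [hP]
    rw [degree_sub_eq_left_of_degree_lt]
    · exact degree_X_pow q
    · rw [degree_X_pow, degree_X]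
      exact_mod_cast (by omega : 1 < q)
  have hP0 : P ≠ 0 := by
    intro h0
    rw [h0, degree_zero] at hdegP
    exact absurd hdegP.symm (by simp)
  have hnatP : natDegree P = q := natDegree_eq_of_degree_eq_some hdegP
  have hroot : ∀ c : Fq, IsRoot P (algebraMap Fq K c) := by
    intro c
    rw [hP]
    simp only [IsRoot, eval_sub, eval_pow, eval_X]
    rw [← map_pow, FiniteField.pow_card, sub_self]
  have hrootz : IsRoot P z := by
    rw [hP]; simp only [IsRoot, eval_sub, eval_pow, eval_X]; rw [hz, sub_self]
  set S : Finset K := insert z (Finset.univ.image (fun c : Fq => algebraMap Fq K c)) with hS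
  have hzS : z ∉ Finset.univ.image (fun c : Fq => algebraMap Fq K c) := by
    intro hmem
    rw [Finset.mem_image] at hmem
    obtain ⟨c, _, hcz⟩ := hmem
    exact hc c hcz
  have hcardS : S.card = q + 1 := by
    rw [hS, Finset.card_insert_of_notMem hzS,
      Finset.card_image_of_injective _ (algebraMap Fq K).injective, Finset.card_univ]
  have hsub : S ⊆ P.roots.toFinset := by
    intro x hx
    rw [Multiset.mem_toFinset, mem_roots hP0]
    rw [hS, Finset.mem_insert] at hx
    rcases hx with rfl | hx
    · exact hrootz
    · rw [Finset.mem_image] at hx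
      obtain ⟨c, _, rfl⟩ := hx
      exact hroot c
  have : S.card ≤ q := by
    calc S.card ≤ P.roots.toFinset.card := Finset.card_le_card hsub
      _ ≤ Multiset.card P.roots := Multiset.toFinset_card_le _
      _ ≤ natDegree P := Polynomial.card_roots' P
      _ = q := hnatP
  omega

/-- Frobenius `x ↦ x^q` is surjective on a finite extension of `Fq`. -/
lemma frob_surjective {K : Type} [Field K] [Algebra Fq K] [Module.Finite Fq K] :
    Function.Surjective (fun x : K => x ^ (Fintype.card Fq)) := by
  obtain ⟨p, hp⟩ := CharP.exists Fq
  haveI : CharP Fq p := hp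
  haveI hfin : Finite K := Module.finite_of_finite Fq
  obtain ⟨n, hpp, hcard⟩ := FiniteField.card Fq p
  haveI : Fact p.Prime := ⟨hpp⟩
  haveI : CharP K p := charP_of_injective_algebraMap (algebraMap Fq K).injective p
  haveI : ExpChar K p := ExpChar.prime hpp
  have hfr : ∀ x : K, (iterateFrobenius K p (n : ℕ)) x = x ^ (Fintype.card Fq) := by
    intro x
    rw [iterateFrobenius_def, hcard]
  have hinj : Function.Injective (iterateFrobenius K p (n : ℕ)) :=
    (iterateFrobenius K p (n : ℕ)).injective
  have hsurj := Finite.injective_iff_surjective.mp hinj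
  intro y
  obtain ⟨x, hx⟩ := hsurj y
  refine ⟨x, ?_⟩
  show x ^ (Fintype.card Fq) = y
  rw [← hfr x]
  exact hx

section Main

variable (ψ : Polynomial Fq →ₗ[Fq] Polynomial Fq)
variable (hψ : ∀ (g : Polynomial Fq) (n : ℕ),
    (ψ g).coeff n = g.coeff (Fintype.card Fq * n))

include hψ in
/-- The prime power case of the fixed-space classification. -/
lemma prime_power_case {g : Fq[X]} (hg : g.Monic) (hirr : Irreducible g) :
    ∀ a : ℕ, 0 < a → ∀ h : Fq[X], degree h < degree (g ^ a) →
      h = Nop ψ ((g ^ a) ^ (Fintype.card Fq - 1) * h) →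
      ∃ c : Fq, h = C c * (g ^ (a - 1) * derivative g) := by
  set q := Fintype.card Fq with hqdef
  have hq2 : 2 ≤ q := two_le_card
  have hg0 : g ≠ 0 := hg.ne_zero
  intro a
  induction a with
  | zero => intro h0; omega
  | succ a ih =>
    intro _ h hdeg heq
    rcases Nat.eq_zero_or_pos a with ha0 | hapos
    · -- base case : a + 1 = 1, irreducible case
      subst ha0
      rw [pow_one] at hdeg heq
      haveI : Fact (Irreducible g) := ⟨hirr⟩
      haveI : Module.Finite Fq (AdjoinRoot g) :=
        Module.Finite.of_basis (AdjoinRoot.powerBasis hg0).basis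
      set K := AdjoinRoot g
      set mkg : Fq[X] →+* K := AdjoinRoot.mk g with hmkg
      have hdernz : derivative g ≠ 0 := derivative_ne_zero_of_irreducible hirr
      have hgbar : mkg (derivative g) ≠ 0 := by
        rw [hmkg, Ne, AdjoinRoot.mk_eq_zero]
        exact not_dvd_derivative_of_irreducible hirr hg0
      obtain ⟨zb, hzb⟩ := frob_surjective (Fq := Fq) (K := K) (mkg h * (mkg (derivative g))⁻¹)
      obtain ⟨z, rfl⟩ := AdjoinRoot.mk_surjective zb
      have hzq : (mkg z) ^ q * mkg (derivative g) = mkg h := by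
        show ((AdjoinRoot.mk g) z) ^ q * mkg (derivative g) = mkg h
        rw [show ((AdjoinRoot.mk g) z) ^ q
            = mkg h * (mkg (derivative g))⁻¹ from hzb]
        field_simp
      have hdvd : g ∣ z ^ q * derivative g - h := by
        rw [← AdjoinRoot.mk_eq_zero]
        rw [map_sub, map_mul, map_pow]
        show (mkg z) ^ q * mkg (derivative g) - mkg h = 0
        rw [hzq, sub_self]
      obtain ⟨w, hw⟩ := hdvd
      have hhrw : h = z ^ q * derivative g - g * w := by
        have := hw; linear_combination -this
      -- compute the operator
      have hNh : Nop ψ (g ^ (q - 1) * h) = z * derivative g - g * Nop ψ w := by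
        rw [hhrw]
        have hsplit : g ^ (q - 1) * (z ^ q * derivative g - g * w)
            = z ^ q * (g ^ (q - 1) * derivative g) - g ^ q * w := by
          have hqq : (q - 1) + 1 = q := by omega
          calc g ^ (q - 1) * (z ^ q * derivative g - g * w)
              = z ^ q * (g ^ (q - 1) * derivative g) - (g ^ (q - 1) * g) * w := by ring
            _ = z ^ q * (g ^ (q - 1) * derivative g) - g ^ q * w := by
                rw [← pow_succ, hqq]
        rw [hsplit, Nop_sub, Nop_pow_card_mul ψ hψ, Nop_pow_card_mul ψ hψ,
          Nop_pow_mul_derivative ψ hψ]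
      -- h = z * g' - g * Nop w
      have heq2 : h = z * derivative g - g * Nop ψ w := by rw [heq, hNh]
      have hmk2 : mkg h = mkg z * mkg (derivative g) := by
        rw [heq2, map_sub, map_mul, map_mul]
        have : mkg g = 0 := by rw [hmkg, AdjoinRoot.mk_eq_zero]
        rw [this, zero_mul, sub_zero]
      have hfix : (mkg z) ^ q = mkg z := by
        have := hzq
        rw [hmk2] at this
        exact mul_right_cancel₀ hgbar this
      obtain ⟨c, hcz⟩ := exists_of_pow_card_eq (K := K) (mkg z) hfix
      have hcz' : mkg (C c) = mkg z := by
        rw [← hcz, hmkg]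
        rfl
      have hfinal : g ∣ h - C c * derivative g := by
        rw [← AdjoinRoot.mk_eq_zero]
        rw [map_sub, map_mul]
        show mkg h - mkg (C c) * mkg (derivative g) = 0
        rw [hmk2, hcz', sub_self]
      have hdegsub : degree (h - C c * derivative g) < degree g := by
        refine lt_of_le_of_lt (degree_sub_le _ _) (max_lt hdeg ?_)
        refine lt_of_le_of_lt (degree_mul_le _ _) ?_
        refine lt_of_le_of_lt (add_le_add degree_C_le le_rfl) ?_
        rw [zero_add]
        exact degree_derivative_lt hg0
      have := Polynomial.eq_zero_of_dvd_of_degree_lt hfinal hdegsub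
      refine ⟨c, ?_⟩
      have : h = C c * derivative g := by linear_combination this
      rw [this]; simp
    · -- inductive step : a ≥ 1
      -- first, g ∣ h
      have hmul1 : (a + 1) * (q - 1) = a * (q - 1) + (q - 1) := by ring
      have hmul2 : 1 * (q - 1) ≤ a * (q - 1) := Nat.mul_le_mul_right _ hapos
      have hexp1 : q ≤ (a + 1) * (q - 1) := by omega
      have hgh : g ∣ h := by
        rw [heq]
        have hE : q + ((a + 1) * (q - 1) - q) = (a + 1) * (q - 1) := by omega
        have hsp : (g ^ (a + 1)) ^ (q - 1) * h
            = g ^ q * (g ^ ((a + 1) * (q - 1) - q) * h) := by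
          rw [← pow_mul]
          calc g ^ ((a + 1) * (q - 1)) * h
              = (g ^ q * g ^ ((a + 1) * (q - 1) - q)) * h := by rw [← pow_add, hE]
            _ = g ^ q * (g ^ ((a + 1) * (q - 1) - q) * h) := by ring
        rw [hsp, Nop_pow_card_mul ψ hψ]
        exact Dvd.intro _ rfl
      obtain ⟨h₁, rfl⟩ := hgh
      -- equation for h₁
      have heq1 : h₁ = Nop ψ ((g ^ a) ^ (q - 1) * h₁) := by
        have hE2 : (a + 1) * (q - 1) + 1 = q + a * (q - 1) := by omega
        have hsplit : (g ^ (a + 1)) ^ (q - 1) * (g * h₁)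
            = g ^ q * ((g ^ a) ^ (q - 1) * h₁) := by
          rw [← pow_mul, ← pow_mul]
          calc g ^ ((a + 1) * (q - 1)) * (g * h₁)
              = (g ^ ((a + 1) * (q - 1)) * g) * h₁ := by ring
            _ = g ^ ((a + 1) * (q - 1) + 1) * h₁ := by rw [pow_succ]
            _ = (g ^ q * g ^ (a * (q - 1))) * h₁ := by rw [hE2, pow_add]
            _ = g ^ q * (g ^ (a * (q - 1)) * h₁) := by ring
        rw [hsplit, Nop_pow_card_mul ψ hψ] at heq
        exact mul_left_cancel₀ hg0 heq
      have hdeg1 : degree h₁ < degree (g ^ a) := by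
        rcases eq_or_ne h₁ 0 with rfl | hne
        · rw [degree_zero]
          exact (bot_lt_iff_ne_bot).mpr (by
            rw [Ne, degree_eq_bot]
            exact pow_ne_zero _ hg0)
        · have hmul : degree (g * h₁) = degree g + degree h₁ := degree_mul
          have hpow : degree (g ^ (a + 1)) = degree g + degree (g ^ a) := by
            rw [pow_succ, mul_comm, degree_mul]
          rw [hmul, hpow] at hdeg
          have hgbot : degree g ≠ ⊥ := by rw [Ne, degree_eq_bot]; exact hg0
          cases hdg : degree g with
          | bot => exact absurd hdg hgbot
          | coe dg =>
            rw [hdg] at hdeg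
            exact lt_of_add_lt_add_left (a := (dg : WithBot ℕ)) hdeg
      obtain ⟨c, hc⟩ := ih hapos h₁ hdeg1 heq1
      refine ⟨c, ?_⟩
      rw [hc]
      have : g * (g ^ (a - 1)) = g ^ a := by
        rw [← pow_succ']
        congr 1
        omega
      calc g * (C c * (g ^ (a - 1) * derivative g))
          = C c * ((g * g ^ (a - 1)) * derivative g) := by ring
        _ = C c * (g ^ ((a + 1) - 1) * derivative g) := by rw [this]; norm_num

include hψ in
/-- The general fixed-space classification by induction on the number of factors. -/
lemma glob_case :
    ∀ k (fi : Fin k → Fq[X]) (a : Fin k → ℕ), Function.Injective fi →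
      (∀ i, (fi i).Monic) → (∀ i, Irreducible (fi i)) → (∀ i, 0 < a i) →
      ∀ h : Fq[X], degree h < degree (∏ i, fi i ^ a i) →
      h = Nop ψ ((∏ i, fi i ^ a i) ^ (Fintype.card Fq - 1) * h) →
      ∃ c : Fin k → Fq,
        h = ∑ i, C (c i) * (derivative (fi i) * ((∏ j, fi j ^ a j) /ₘ fi i)) := by
  set q := Fintype.card Fq with hqdef
  have hq2 : 2 ≤ q := two_le_card
  intro k
  induction k with
  | zero =>
    intro fi a _ _ _ _ h hdeg _
    have h0 : h = 0 := by
      by_contra hne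
      have := zero_le_degree_iff.mpr hne
      rw [show (∏ i : Fin 0, fi i ^ a i) = 1 from Finset.prod_empty, degree_one] at hdeg
      exact absurd (lt_of_le_of_lt this hdeg) (lt_irrefl 0)
    exact ⟨fun i => i.elim0, by simp [h0]⟩
  | succ k ih =>
    intro fi a hinj hmonic hirr ha h hdeg heq
    set g := fi 0 with hgdef
    set u : Fq[X] := g ^ (a 0) with hudef
    set v : Fq[X] := ∏ i : Fin k, fi i.succ ^ a i.succ with hvdef
    have hF : (∏ i, fi i ^ a i) = u * v := by
      rw [Fin.prod_univ_succ]
    have hu : u.Monic := (hmonic 0).pow _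
    have hv : v.Monic := monic_prod_of_monic _ _ (fun i _ => (hmonic _).pow _)
    have hu0 : u ≠ 0 := hu.ne_zero
    have hv0 : v ≠ 0 := hv.ne_zero
    have hbase : ∀ i : Fin k, IsCoprime g (fi i.succ) := by
      intro i
      exact (hirr 0).coprime_iff_not_dvd.mpr
        (not_dvd_of_ne (hirr 0) (hirr i.succ) (hmonic 0) (hmonic i.succ)
          (hinj.ne (Fin.succ_ne_zero i).symm))
    have hcop : IsCoprime u v := by
      rw [hudef, hvdef]
      exact ((IsCoprime.prod_right (fun i _ => (hbase i).pow_right)).pow_left)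
    obtain ⟨s, t, hst⟩ := id hcop
    -- partial fraction decomposition of h
    set A : Fq[X] := (h * t) %ₘ u with hAdef
    set Qp : Fq[X] := (h * t) /ₘ u with hQdef
    have hmoddiv : A + u * Qp = h * t := by rw [hAdef, hQdef]; exact modByMonic_add_div _ u
    set B : Fq[X] := h * s + Qp * v with hBdef
    have hhAB : h = A * v + B * u := by
      have hA : A = h * t - u * Qp := by linear_combination hmoddiv
      rw [hA, hBdef]
      linear_combination (-h) * hst
    have hdA : degree A < degree u := by
      rw [hAdef]; exact degree_modByMonic_lt _ hu
    have hdegF : degree h < degree u + degree v := by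
      rw [hF, degree_mul] at hdeg; exact hdeg
    have hvbot : degree v ≠ ⊥ := by rw [Ne, degree_eq_bot]; exact hv0
    have hubot : degree u ≠ ⊥ := by rw [Ne, degree_eq_bot]; exact hu0
    have hdB : degree B < degree v := by
      rcases eq_or_ne B 0 with hB0 | hBne
      · rw [hB0, degree_zero]; exact bot_lt_iff_ne_bot.mpr hvbot
      · have hBu : B * u = h - A * v := by linear_combination -hhAB
        have hAv : degree (A * v) < degree u + degree v := by
          refine lt_of_le_of_lt (degree_mul_le _ _) ?_
          exact WithBot.add_lt_add_right hvbot hdA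
        have hlt : degree B + degree u < degree u + degree v := by
          rw [← degree_mul, hBu]
          exact lt_of_le_of_lt (degree_sub_le _ _) (max_lt hdegF hAv)
        rw [add_comm (degree B) (degree u)] at hlt
        exact (WithBot.add_lt_add_iff_left hubot).mp hlt
    -- the split equation
    set A' : Fq[X] := Nop ψ (u ^ (q - 1) * A) with hA'def
    set B' : Fq[X] := Nop ψ (v ^ (q - 1) * B) with hB'def
    have hsplit : (u * v) ^ (q - 1) * h
        = v ^ q * (u ^ (q - 1) * A) + u ^ q * (v ^ (q - 1) * B) := by
      rw [hhAB]
      have hqq : (q - 1) + 1 = q := by omega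
      calc (u * v) ^ (q - 1) * (A * v + B * u)
          = (v ^ (q - 1) * v) * (u ^ (q - 1) * A) + (u ^ (q - 1) * u) * (v ^ (q - 1) * B) := by
            rw [mul_pow]; ring
        _ = v ^ q * (u ^ (q - 1) * A) + u ^ q * (v ^ (q - 1) * B) := by
            rw [← pow_succ, ← pow_succ, hqq]
    have heq' : h = A' * v + B' * u := by
      rw [hF] at heq
      rw [hsplit, Nop_add, Nop_pow_card_mul ψ hψ, Nop_pow_card_mul ψ hψ] at heq
      rw [heq, hA'def, hB'def]; ring
    -- degrees of A' and B'
    have hdegu : degree u = ((natDegree u : ℕ) : WithBot ℕ) := degree_eq_natDegree hu0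
    have hdegv : degree v = ((natDegree v : ℕ) : WithBot ℕ) := degree_eq_natDegree hv0
    have hdA' : degree A' < degree u := by
      rw [hA'def, hdegu]
      apply degree_Nop_lt ψ hψ
      have h1 : degree (u ^ (q - 1)) ≤ (((q - 1) * natDegree u : ℕ) : WithBot ℕ) := by
        rw [degree_pow, hdegu]
        exact_mod_cast le_of_eq (by push_cast; ring)
      have h2 : degree A < ((natDegree u : ℕ) : WithBot ℕ) := by rw [← hdegu]; exact hdA
      have := degree_mul_lt_aux h1 h2
      refine lt_of_lt_of_le this ?_
      exact_mod_cast le_of_eq (pred_mul_add q (natDegree u) (by omega))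
    have hdB' : degree B' < degree v := by
      rw [hB'def, hdegv]
      apply degree_Nop_lt ψ hψ
      have h1 : degree (v ^ (q - 1)) ≤ (((q - 1) * natDegree v : ℕ) : WithBot ℕ) := by
        rw [degree_pow, hdegv]
        exact_mod_cast le_of_eq (by push_cast; ring)
      have h2 : degree B < ((natDegree v : ℕ) : WithBot ℕ) := by rw [← hdegv]; exact hdB
      have := degree_mul_lt_aux h1 h2
      refine lt_of_lt_of_le this ?_
      exact_mod_cast le_of_eq (pred_mul_add q (natDegree v) (by omega))
    -- uniqueness of partial fractions : A = A', B = B'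
    have hABeq : (A - A') * v = (B' - B) * u := by linear_combination heq' - hhAB
    have hudvd : u ∣ (A - A') * v := ⟨B' - B, by rw [hABeq]; exact mul_comm _ _⟩
    have hAA' : A = A' := by
      have hdvd2 : u ∣ A - A' := hcop.dvd_of_dvd_mul_right hudvd
      have hdlt : degree (A - A') < degree u :=
        lt_of_le_of_lt (degree_sub_le _ _) (max_lt hdA hdA')
      have := Polynomial.eq_zero_of_dvd_of_degree_lt hdvd2 hdlt
      linear_combination this
    have hBB' : B = B' := by
      have : (B' - B) * u = 0 := by rw [← hABeq, hAA']; ring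
      rcases mul_eq_zero.mp this with h1 | h1
      · linear_combination -h1
      · exact absurd h1 hu0
    -- apply the prime-power case to A
    have hAeq : A = Nop ψ ((g ^ (a 0)) ^ (q - 1) * A) := by
      conv_lhs => rw [hAA', hA'def]
    obtain ⟨c0, hc0⟩ := prime_power_case ψ hψ (hmonic 0) (hirr 0) (a 0) (ha 0) A
      (by rw [← hudef]; exact hdA) hAeq
    -- apply the induction hypothesis to B
    have hBeq : B = Nop ψ ((∏ i : Fin k, fi i.succ ^ a i.succ) ^ (q - 1) * B) := by
      conv_lhs => rw [hBB', hB'def]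
    obtain ⟨c, hc⟩ := ih (fun i => fi i.succ) (fun i => a i.succ)
      (fun i j hij => Fin.succ_injective k (hinj hij))
      (fun i => hmonic i.succ) (fun i => hirr i.succ) (fun i => ha i.succ) B
      (by rw [← hvdef]; exact hdB) hBeq
    -- assemble
    refine ⟨Fin.cons c0 c, ?_⟩
    have hdiv0 : (∏ i, fi i ^ a i) /ₘ g = g ^ (a 0 - 1) * v := by
      have : (∏ i, fi i ^ a i) = g * (g ^ (a 0 - 1) * v) := by
        rw [hF, hudef, ← mul_assoc, ← pow_succ']
        congr 2
        have := ha 0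
        omega
      rw [this, mul_divByMonic_cancel_left _ (hmonic 0)]
    have hdivs : ∀ i : Fin k,
        (∏ j, fi j ^ a j) /ₘ fi i.succ = u * (v /ₘ fi i.succ) := by
      intro i
      have hdvd : fi i.succ ∣ v := by
        have := ha i.succ
        refine dvd_trans (dvd_pow_self _ (by omega : a i.succ ≠ 0)) ?_
        exact Finset.dvd_prod_of_mem _ (Finset.mem_univ i)
      have hvw : v = fi i.succ * (v /ₘ fi i.succ) := by
        have hm0 : v %ₘ fi i.succ = 0 := (modByMonic_eq_zero_iff_dvd (hmonic _)).mpr hdvd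
        have := modByMonic_add_div v (fi i.succ)
        rw [hm0, zero_add] at this
        exact this.symm
      have : (∏ j, fi j ^ a j) = fi i.succ * (u * (v /ₘ fi i.succ)) := by
        rw [hF]
        conv_lhs => rw [hvw]
        ring
      rw [this, mul_divByMonic_cancel_left _ (hmonic i.succ)]
    rw [Fin.sum_univ_succ]
    simp only [Fin.cons_zero, Fin.cons_succ]
    rw [hdiv0]
    have hterm : ∀ i : Fin k,
        C (c i) * (derivative (fi i.succ) * ((∏ j, fi j ^ a j) /ₘ fi i.succ))
          = (C (c i) * (derivative (fi i.succ) * (v /ₘ fi i.succ))) * u := by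
      intro i
      rw [hdivs i]; ring
    rw [Finset.sum_congr rfl (fun i _ => hterm i), ← Finset.sum_mul, ← hc]
    rw [hhAB, hc0]
    rw [← hgdef]
    ring

end Main

end NiederAux

open NiederAux in
/-- For `f = ∏ f_i^{a_i} ∈ F_q[x]` of degree `d ≥ 1` with the `f_i` distinct monic
irreducibles, the images in `R = F_q[x]/(f)` of the polynomials `f_i′·(f/f_i)` form an
`F_q`-basis of the fixed space `R_1(D) = {h ∈ R : D h = h}` of the operator `D` induced
by `h ↦ ψ_q(H^{(q-1)}(f^{q-1}·h))`. -/
theorem niederreiter_fixed_space_basis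
    (Fq : Type) [Field Fq] [Fintype Fq]
    (ψ : Polynomial Fq →ₗ[Fq] Polynomial Fq)
    (hψ : ∀ (g : Polynomial Fq) (n : ℕ),
      (ψ g).coeff n = g.coeff (Fintype.card Fq * n))
    (f : Polynomial Fq) (d : ℕ) (hd : 1 ≤ d) (hdeg : f.natDegree = d)
    (k : ℕ) (fi : Fin k → Polynomial Fq) (a : Fin k → ℕ)
    (hinj : Function.Injective fi)
    (hmonic : ∀ i, (fi i).Monic) (hirr : ∀ i, Irreducible (fi i))
    (ha : ∀ i, 1 ≤ a i) (hfact : f = ∏ i, fi i ^ a i)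
    (D : AdjoinRoot f →ₗ[Fq] AdjoinRoot f)
    (hD : ∀ h : Polynomial Fq,
      D (AdjoinRoot.mk f h) =
        AdjoinRoot.mk f (ψ (Polynomial.hasseDeriv (Fintype.card Fq - 1)
          (f ^ (Fintype.card Fq - 1) * h)))) :
    LinearIndependent Fq
        (fun i : Fin k =>
          AdjoinRoot.mk f (Polynomial.derivative (fi i) * (f /ₘ fi i))) ∧
      Submodule.span Fq
          (Set.range fun i : Fin k =>
            AdjoinRoot.mk f (Polynomial.derivative (fi i) * (f /ₘ fi i))) =
        LinearMap.ker (D - LinearMap.id) := by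
  classical
  set q := Fintype.card Fq with hqdef
  have hq2 : 2 ≤ q := two_le_card
  have hfm : f.Monic := by
    rw [hfact]
    exact monic_prod_of_monic _ _ (fun i _ => (hmonic i).pow _)
  have hf0 : f ≠ 0 := hfm.ne_zero
  have hdegf : degree f = ((d : ℕ) : WithBot ℕ) := by
    rw [degree_eq_natDegree hf0, hdeg]
  -- hD in terms of Nop
  have hD' : ∀ h : Polynomial Fq,
      D (AdjoinRoot.mk f h) = AdjoinRoot.mk f (Nop ψ (f ^ (q - 1) * h)) := hD
  -- basic facts about the generators
  have hderne : ∀ i, derivative (fi i) ≠ 0 := fun i =>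
    derivative_ne_zero_of_irreducible (hirr i)
  have hfi0 : ∀ i, fi i ≠ 0 := fun i => (hmonic i).ne_zero
  have hfdvd : ∀ i, fi i ∣ f := by
    intro i
    rw [hfact]
    exact dvd_trans (dvd_pow_self _ (by have := ha i; omega)) (Finset.dvd_prod_of_mem _
      (Finset.mem_univ i))
  have hfw : ∀ i, f = fi i * (f /ₘ fi i) := by
    intro i
    have hm0 : f %ₘ fi i = 0 := (modByMonic_eq_zero_iff_dvd (hmonic i)).mpr (hfdvd i)
    have := modByMonic_add_div f (fi i)
    rw [hm0, zero_add] at this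
    exact this.symm
  have hw0 : ∀ i, f /ₘ fi i ≠ 0 := by
    intro i hc
    apply hf0
    rw [hfw i, hc, mul_zero]
  have hti : ∀ i, 0 < (fi i).natDegree := fun i => (hirr i).natDegree_pos
  have htd : ∀ i, (fi i).natDegree ≤ d := by
    intro i
    rw [← hdeg]
    exact Polynomial.natDegree_le_of_dvd (hfdvd i) hf0
  -- each generator has degree < d
  have hdHi : ∀ i, degree (derivative (fi i) * (f /ₘ fi i)) < ((d : ℕ) : WithBot ℕ) := by
    intro i
    have hnd : natDegree (derivative (fi i) * (f /ₘ fi i))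
        = natDegree (derivative (fi i)) + natDegree (f /ₘ fi i) :=
      natDegree_mul (hderne i) (hw0 i)
    have h1 : natDegree (derivative (fi i)) < (fi i).natDegree :=
      natDegree_derivative_lt (by have := hti i; omega)
    have h2 : natDegree (f /ₘ fi i) = d - (fi i).natDegree := by
      rw [natDegree_divByMonic _ (hmonic i), hdeg]
    have hne : derivative (fi i) * (f /ₘ fi i) ≠ 0 :=
      mul_ne_zero (hderne i) (hw0 i)
    rw [degree_eq_natDegree hne]
    have : natDegree (derivative (fi i) * (f /ₘ fi i)) < d := by
      rw [hnd, h2]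
      have := hti i; have := htd i
      omega
    exact_mod_cast this
  -- each generator is fixed by D
  have hfixed : ∀ i, D (AdjoinRoot.mk f (derivative (fi i) * (f /ₘ fi i)))
      = AdjoinRoot.mk f (derivative (fi i) * (f /ₘ fi i)) := by
    intro i
    rw [hD']
    congr 1
    set w := f /ₘ fi i with hwdef
    have hqq : (q - 1) + 1 = q := by omega
    have hkey : f ^ (q - 1) * (derivative (fi i) * w)
        = w ^ q * (fi i ^ (q - 1) * derivative (fi i)) := by
      conv_lhs => rw [hfw i, ← hwdef]
      rw [mul_pow]
      calc fi i ^ (q - 1) * w ^ (q - 1) * (derivative (fi i) * w)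
          = (w ^ (q - 1) * w) * (fi i ^ (q - 1) * derivative (fi i)) := by ring
        _ = w ^ q * (fi i ^ (q - 1) * derivative (fi i)) := by rw [← pow_succ, hqq]
    rw [hkey, Nop_pow_card_mul ψ hψ, Nop_pow_mul_derivative ψ hψ]
    ring
  constructor
  · -- linear independence
    rw [Fintype.linearIndependent_iff]
    intro c hc
    have hsum : AdjoinRoot.mk f (∑ i, c i • (derivative (fi i) * (f /ₘ fi i))) = 0 := by
      rw [map_sum, ← hc]
      exact Finset.sum_congr rfl fun i _ => by rw [AdjoinRoot.smul_mk]
    have hdvd : f ∣ ∑ i, c i • (derivative (fi i) * (f /ₘ fi i)) := by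
      rwa [AdjoinRoot.mk_eq_zero] at hsum
    have hdegS : degree (∑ i, c i • (derivative (fi i) * (f /ₘ fi i))) < degree f := by
      rw [hdegf]
      refine lt_of_le_of_lt (degree_sum_le _ _) ?_
      rw [Finset.sup_lt_iff (by
        exact (bot_lt_iff_ne_bot).mpr (by exact_mod_cast WithBot.coe_ne_bot))]
      intro i _
      exact lt_of_le_of_lt (degree_smul_le _ _) (hdHi i)
    have hS0 : (∑ i, c i • (derivative (fi i) * (f /ₘ fi i))) = 0 :=
      Polynomial.eq_zero_of_dvd_of_degree_lt hdvd hdegS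
    intro j
    by_contra hcj
    -- isolate the j-th term
    have hsplit : c j • (derivative (fi j) * (f /ₘ fi j))
        = - ∑ i ∈ Finset.univ.erase j, c i • (derivative (fi i) * (f /ₘ fi i)) := by
      have := Finset.add_sum_erase Finset.univ
        (fun i => c i • (derivative (fi i) * (f /ₘ fi i))) (Finset.mem_univ j)
      rw [hS0] at this
      linear_combination this
    set Mj : Fq[X] := ∏ l ∈ Finset.univ.erase j, fi l ^ a l with hMjdef
    have hfMj : f = fi j ^ a j * Mj := by
      rw [hfact, hMjdef]
      exact (Finset.mul_prod_erase Finset.univ (fun l => fi l ^ a l)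
        (Finset.mem_univ j)).symm
    have hwj : f /ₘ fi j = fi j ^ (a j - 1) * Mj := by
      have : f = fi j * (fi j ^ (a j - 1) * Mj) := by
        rw [hfMj, ← mul_assoc, ← pow_succ']
        congr 2
        have := ha j; omega
      rw [this, mul_divByMonic_cancel_left _ (hmonic j)]
    have hdvdrhs : fi j ^ a j ∣
        ∑ i ∈ Finset.univ.erase j, c i • (derivative (fi i) * (f /ₘ fi i)) := by
      refine Finset.dvd_sum ?_
      intro i hi
      have hij : i ≠ j := (Finset.mem_erase.mp hi).1
      have hdvdw : fi j ^ a j ∣ f /ₘ fi i := by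
        have : f /ₘ fi i = fi i ^ (a i - 1) * ∏ l ∈ Finset.univ.erase i, fi l ^ a l := by
          have : f = fi i * (fi i ^ (a i - 1) * ∏ l ∈ Finset.univ.erase i, fi l ^ a l) := by
            rw [hfact, ← Finset.mul_prod_erase _ _ (Finset.mem_univ i), ← mul_assoc,
              ← pow_succ']
            congr 2
            have := ha i; omega
          rw [this, mul_divByMonic_cancel_left _ (hmonic i)]
        rw [this]
        refine Dvd.dvd.mul_left ?_ _
        exact Finset.dvd_prod_of_mem _ (Finset.mem_erase.mpr ⟨hij.symm, Finset.mem_univ j⟩)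
      rw [smul_eq_C_mul]
      exact Dvd.dvd.mul_left (Dvd.dvd.mul_left hdvdw _) _
    have hdvdj : fi j ^ a j ∣ c j • (derivative (fi j) * (f /ₘ fi j)) := by
      rw [hsplit]
      exact Dvd.dvd.neg_right hdvdrhs
    have hprime : Prime (fi j) := (hirr j).prime
    have hdvd2 : fi j ∣ C (c j) * (derivative (fi j) * Mj) := by
      have hrw : c j • (derivative (fi j) * (f /ₘ fi j))
          = fi j ^ (a j - 1) * (C (c j) * (derivative (fi j) * Mj)) := by
        rw [smul_eq_C_mul, hwj]; ring
      rw [hrw] at hdvdj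
      have hpow : fi j ^ a j = fi j ^ (a j - 1) * fi j := by
        rw [← pow_succ]
        congr 1
        have := ha j; omega
      rw [hpow] at hdvdj
      exact (mul_dvd_mul_iff_left (pow_ne_zero _ (hfi0 j))).mp hdvdj
    rcases hprime.dvd_mul.mp hdvd2 with h1 | h1
    · have : IsUnit (C (c j)) := isUnit_C.mpr (isUnit_iff_ne_zero.mpr hcj)
      exact (hirr j).not_isUnit (isUnit_of_dvd_unit h1 this)
    rcases hprime.dvd_mul.mp h1 with h2 | h2
    · exact not_dvd_derivative_of_irreducible (hirr j) (hfi0 j) h2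
    · obtain ⟨l, hl, hdvdl⟩ := hprime.exists_mem_finset_dvd h2
      have hlj : l ≠ j := (Finset.mem_erase.mp hl).1
      have : fi j ∣ fi l := hprime.dvd_of_dvd_pow hdvdl
      have heql : fi j = fi l :=
        Polynomial.eq_of_monic_of_associated (hmonic j) (hmonic l)
          ((hirr j).associated_of_dvd (hirr l) this)
      exact hlj (hinj heql.symm)
  · -- span = ker
    apply le_antisymm
    · rw [Submodule.span_le]
      rintro _ ⟨i, rfl⟩
      rw [SetLike.mem_coe, LinearMap.mem_ker, LinearMap.sub_apply, LinearMap.id_apply,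
        sub_eq_zero]
      exact hfixed i
    · intro x hx
      rw [LinearMap.mem_ker, LinearMap.sub_apply, LinearMap.id_apply, sub_eq_zero] at hx
      obtain ⟨r, rfl⟩ := AdjoinRoot.mk_surjective x
      set h : Fq[X] := r %ₘ f with hhdef
      have hmkeq : AdjoinRoot.mk f h = AdjoinRoot.mk f r := by
        rw [AdjoinRoot.mk_eq_mk]
        have := modByMonic_add_div r f
        refine ⟨-(r /ₘ f), ?_⟩
        rw [hhdef]
        linear_combination this
      have hdegh : degree h < degree f := by
        rw [hhdef]
        exact degree_modByMonic_lt _ hfm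
      have hDh : D (AdjoinRoot.mk f h) = AdjoinRoot.mk f h := by
        rw [hmkeq]; exact hx
      rw [hD' h] at hDh
      have hdvd : f ∣ Nop ψ (f ^ (q - 1) * h) - h := by
        rwa [AdjoinRoot.mk_eq_mk] at hDh
      have hdegN : degree (Nop ψ (f ^ (q - 1) * h)) < ((d : ℕ) : WithBot ℕ) := by
        apply degree_Nop_lt ψ hψ
        have h1 : degree (f ^ (q - 1)) ≤ (((q - 1) * d : ℕ) : WithBot ℕ) := by
          rw [degree_pow, hdegf]
          exact_mod_cast le_of_eq (by push_cast; ring)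
        have h2 : degree h < ((d : ℕ) : WithBot ℕ) := by rw [← hdegf]; exact hdegh
        have := degree_mul_lt_aux h1 h2
        refine lt_of_lt_of_le this ?_
        exact_mod_cast le_of_eq (pred_mul_add q d (by omega))
      have heq : h = Nop ψ (f ^ (q - 1) * h) := by
        have hdeglt : degree (Nop ψ (f ^ (q - 1) * h) - h) < degree f := by
          rw [hdegf]
          refine lt_of_le_of_lt (degree_sub_le _ _) (max_lt hdegN ?_)
          rw [← hdegf]; exact hdegh
        have := Polynomial.eq_zero_of_dvd_of_degree_lt hdvd hdeglt
        linear_combination -this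
      obtain ⟨c, hc⟩ := glob_case ψ hψ k fi a hinj hmonic hirr
        (fun i => ha i) h
        (by rw [← hfact]; exact hdegh)
        (by rw [← hfact]; exact heq)
      rw [← hfact] at hc
      rw [← hmkeq, hc, map_sum]
      apply Submodule.sum_mem
      intro i _
      have hsm : AdjoinRoot.mk f (C (c i) * (derivative (fi i) * (f /ₘ fi i)))
          = c i • AdjoinRoot.mk f (derivative (fi i) * (f /ₘ fi i)) := by
        rw [AdjoinRoot.smul_mk, smul_eq_C_mul]
      rw [hsm]
      exact Submodule.smul_mem _ _ (Submodule.subset_span ⟨i, rfl⟩)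
end

section
/- Let f ∈ F_q[x] be a polynomial of degree d ≥ 1 with f(0) ≠ 0, and let R = F_q[x]/(f). Let D be the F_q-linear endomorphism of R induced by h ↦ ψ_q(H^{(q-1)}(f^{q-1}·h)), and let G be the F_q-linear endomorphism of R induced by h ↦ ψ_q(f^{q-1}·h). Then the class of x is a unit in R and D = x^{-1} ∘ G ∘ x as endomorphisms of R; equivalently, for every h ∈ R, x·D(h) = G(x·h). -/
lemma key_choose (p : ℕ) [hp : Fact p.Prime] (e : ℕ) :
    ∀ m : ℕ, Nat.choose (p ^ e * (m + 1) - 1) (p ^ e - 1) ≡ 1 [MOD p] := by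
  induction e with
  | zero => intro m; simp [Nat.ModEq.refl]
  | succ e ih =>
    intro m
    have hp1 : 2 ≤ p := hp.out.two_le
    set M := p ^ e * (m + 1) with hM
    have hM1 : 1 ≤ M := Nat.one_le_iff_ne_zero.mpr (by positivity)
    have hPM : p ^ (e + 1) * (m + 1) = p * M := by rw [hM, pow_succ]; ring
    have hpe : 1 ≤ p ^ e := Nat.one_le_pow _ _ hp.out.pos
    have hPe : p ^ (e + 1) = p * p ^ e := by rw [pow_succ]; ring
    have ha : p ^ (e + 1) * (m + 1) - 1 = p * (M - 1) + (p - 1) := by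
      rw [hPM, Nat.mul_sub p M 1]; have := Nat.mul_le_mul_left p hM1; omega
    have hb : p ^ (e + 1) - 1 = p * (p ^ e - 1) + (p - 1) := by
      rw [hPe, Nat.mul_sub p (p ^ e) 1]; have := Nat.mul_le_mul_left p hpe; omega
    have hlt : p - 1 < p := by omega
    have h1 := @Choose.choose_modEq_choose_mod_mul_choose_div_nat
      (p ^ (e + 1) * (m + 1) - 1) (p ^ (e + 1) - 1) p hp
    rw [ha, hb] at h1
    simp only [Nat.mul_add_mod, Nat.mul_add_div hp.out.pos,
        Nat.mod_eq_of_lt hlt, Nat.div_eq_of_lt hlt, Nat.choose_self, Nat.add_zero,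
        one_mul] at h1
    rw [ha, hb]
    exact h1.trans (ih m)


/-- If `f ∈ F_q[x]` has degree `d ≥ 1` and `f(0) ≠ 0`, then the class of `x` is a unit in
`R = F_q[x]/(f)` and `D = x⁻¹ ∘ G ∘ x`, i.e. `x·D(h) = G(x·h)` for all `h ∈ R`, where `D`
and `G` are induced by `h ↦ ψ_q(H^{(q-1)}(f^{q-1}·h))` and `h ↦ ψ_q(f^{q-1}·h)`. -/
theorem D_conjugate_to_G
    (Fq : Type) [Field Fq] [Fintype Fq]
    (ψ : Polynomial Fq →ₗ[Fq] Polynomial Fq)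
    (hψ : ∀ (g : Polynomial Fq) (n : ℕ),
      (ψ g).coeff n = g.coeff (Fintype.card Fq * n))
    (f : Polynomial Fq) (hd : 1 ≤ f.natDegree) (h0 : f.eval 0 ≠ 0)
    (D : AdjoinRoot f →ₗ[Fq] AdjoinRoot f)
    (hD : ∀ h : Polynomial Fq,
      D (AdjoinRoot.mk f h) =
        AdjoinRoot.mk f (ψ (Polynomial.hasseDeriv (Fintype.card Fq - 1)
          (f ^ (Fintype.card Fq - 1) * h))))
    (G : AdjoinRoot f →ₗ[Fq] AdjoinRoot f)
    (hG : ∀ h : Polynomial Fq,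
      G (AdjoinRoot.mk f h) =
        AdjoinRoot.mk f (ψ (f ^ (Fintype.card Fq - 1) * h))) :
    IsUnit (AdjoinRoot.mk f Polynomial.X) ∧
      ∀ y : AdjoinRoot f,
        AdjoinRoot.mk f Polynomial.X * D y = G (AdjoinRoot.mk f Polynomial.X * y) := by
  classical
  set q := Fintype.card Fq with hq
  -- the characteristic and cardinality
  obtain ⟨p, hpI⟩ := CharP.exists Fq
  have hp : p.Prime := CharP.char_is_prime Fq p
  haveI : Fact p.Prime := ⟨hp⟩
  obtain ⟨e, he⟩ : ∃ e : ℕ, q = p ^ e := by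
    obtain ⟨n, -, hn⟩ := FiniteField.card Fq p
    exact ⟨(n : ℕ), hn⟩
  have hq1 : 1 ≤ q := Fintype.card_pos
  -- the key binomial coefficient is 1 in Fq
  have hchoose : ∀ n : ℕ, (((q * n + (q - 1)).choose (q - 1) : ℕ) : Fq) = 1 := by
    intro n
    have hmul : p ^ e * (n + 1) = q * n + q := by rw [← he, Nat.mul_succ]
    have h1 : q * n + (q - 1) = p ^ e * (n + 1) - 1 := by omega
    have h2 : q - 1 = p ^ e - 1 := by rw [he]
    rw [h1, h2]
    have := (CharP.natCast_eq_natCast Fq p).mpr (key_choose p e n)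
    simpa using this
  -- the key polynomial identity
  have hpoly : ∀ g : Polynomial Fq,
      Polynomial.X * ψ (Polynomial.hasseDeriv (q - 1) g) = ψ (Polynomial.X * g) := by
    intro g
    ext n
    cases n with
    | zero =>
      simp [hψ, Polynomial.mul_coeff_zero]
    | succ n =>
      rw [Polynomial.coeff_X_mul, hψ, hψ, Polynomial.hasseDeriv_coeff]
      have h2 : q * (n + 1) = (q * n + (q - 1)) + 1 := by
        have h3 : q * (n + 1) = q * n + q := by ring
        omega
      rw [h2, Polynomial.coeff_X_mul, hchoose n, one_mul]
  constructor
  · -- x is a unit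
    set c := f.eval 0 with hc
    have hcoeff : f.coeff 0 = c := Polynomial.coeff_zero_eq_eval_zero f
    have hXdiv : Polynomial.X * f.divX + Polynomial.C c = f := by
      rw [← hcoeff]; exact Polynomial.X_mul_divX_add f
    have h1 : Polynomial.C c⁻¹ * f = Polynomial.C c⁻¹ * (Polynomial.X * f.divX) + 1 := by
      conv_lhs => rw [← hXdiv]
      rw [mul_add, ← Polynomial.C_mul, inv_mul_cancel₀ h0, Polynomial.C_1]
    refine IsUnit.of_mul_eq_one (-(AdjoinRoot.mk f (Polynomial.C c⁻¹ * f.divX))) ?_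
    have h2 : Polynomial.X * (Polynomial.C c⁻¹ * f.divX) = Polynomial.C c⁻¹ * f - 1 := by
      rw [h1]; ring
    rw [mul_neg, ← map_mul, h2, map_sub, map_mul, AdjoinRoot.mk_self, mul_zero, map_one,
      zero_sub, neg_neg]
  · intro y
    obtain ⟨h, rfl⟩ := AdjoinRoot.mk_surjective y
    rw [hD h, ← map_mul, ← map_mul, hG, hpoly (f ^ (q - 1) * h),
      show Polynomial.X * (f ^ (q - 1) * h) = f ^ (q - 1) * (Polynomial.X * h) by ring]
end

section
/- Let f ∈ F_q[x] be a polynomial of degree d ≥ 1 and let R = F_q[x]/(f). Let F be the F_q-linear endomorphism of R induced by h ↦ h^q, and let D be the F_q-linear endomorphism of R induced by h ↦ ψ_q(H^{(q-1)}(f^{q-1}·h)). Then there exists a nondegenerate F_q-bilinear form B : R × R → F_q such that B(F(a), b) = B(a, D(b)) for all a, b ∈ R. -/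
open Polynomial

private lemma aux_choose_one {Fq : Type} [Field Fq] [Fintype Fq] (n : ℕ) :
    (((Fintype.card Fq * n + (Fintype.card Fq - 1)).choose (Fintype.card Fq - 1) : ℕ) : Fq)
      = 1 := by
  set q := Fintype.card Fq with hq
  have hq2 : 1 < q := Fintype.one_lt_card
  have hcast := coeff_one_add_X_pow Fq (q * n + (q - 1)) (q - 1)
  rw [← hcast]
  have h1 : ((1 : Fq[X]) + X) ^ (q * n + (q - 1)) = (1 + X ^ q) ^ n * (1 + X) ^ (q - 1) := by
    rw [pow_add, pow_mul]
    congr 2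
    rw [← FiniteField.expand_card ((1 : Fq[X]) + X)]
    simp
    rfl
  obtain ⟨r, hr⟩ : (X : Fq[X]) ^ q ∣ ((1 + X ^ q) ^ n - 1) := by
    have h := sub_dvd_pow_sub_pow ((1 : Fq[X]) + X ^ q) 1 n
    rwa [add_sub_cancel_left, one_pow] at h
  have h2 : ((1 : Fq[X]) + X ^ q) ^ n = 1 + X ^ q * r := by rw [← hr]; ring
  rw [h1, h2, add_mul, one_mul, coeff_add]
  have h3 : ((X : Fq[X]) ^ q * r * (1 + X) ^ (q - 1)).coeff (q - 1) = 0 := by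
    have hcomm : (X : Fq[X]) ^ q * r * (1 + X) ^ (q - 1)
        = (r * (1 + X) ^ (q - 1)) * X ^ q := by ring
    rw [hcomm, coeff_mul_X_pow', if_neg (by omega)]
  rw [h3, add_zero, coeff_one_add_X_pow, Nat.choose_self, Nat.cast_one]

private lemma aux_coeff_monic_mul {Fq : Type} [Field Fq] (P R : Fq[X]) (hP : P.Monic)
    {i : ℕ} (hR : R.natDegree ≤ i) :
    (P * R).coeff (P.natDegree + i) = R.coeff i := by
  rw [coeff_mul, Finset.sum_eq_single (P.natDegree, i)]
  · rw [hP.coeff_natDegree, one_mul]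
  · rintro ⟨a, b⟩ hab hne
    simp only [Finset.HasAntidiagonal.mem_antidiagonal] at hab
    rcases lt_trichotomy a P.natDegree with h | h | h
    · have hb : i < b := by omega
      rw [coeff_eq_zero_of_natDegree_lt (lt_of_le_of_lt hR hb), mul_zero]
    · exfalso; apply hne; subst h
      have : b = i := by omega
      rw [this]
    · rw [coeff_eq_zero_of_natDegree_lt h, zero_mul]
  · intro h; simp at h

/-- There is a nondegenerate `F_q`-bilinear form on `R = F_q[x]/(f)` with respect to which
the Frobenius `F : h ↦ h^q` and the operator `D` induced by `h ↦ ψ_q(H^{(q-1)}(f^{q-1}·h))`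
are dual to each other. -/
theorem frobenius_dual_to_D
    (Fq : Type) [Field Fq] [Fintype Fq]
    (ψ : Polynomial Fq →ₗ[Fq] Polynomial Fq)
    (hψ : ∀ (g : Polynomial Fq) (n : ℕ),
      (ψ g).coeff n = g.coeff (Fintype.card Fq * n))
    (f : Polynomial Fq) (hd : 1 ≤ f.natDegree)
    (F : AdjoinRoot f →ₗ[Fq] AdjoinRoot f)
    (hF : ∀ y, F y = y ^ Fintype.card Fq)
    (D : AdjoinRoot f →ₗ[Fq] AdjoinRoot f)
    (hD : ∀ h : Polynomial Fq,
      D (AdjoinRoot.mk f h) =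
        AdjoinRoot.mk f (ψ (Polynomial.hasseDeriv (Fintype.card Fq - 1)
          (f ^ (Fintype.card Fq - 1) * h)))) :
    ∃ B : AdjoinRoot f →ₗ[Fq] AdjoinRoot f →ₗ[Fq] Fq,
      (∀ a, (∀ b, B a b = 0) → a = 0) ∧
      (∀ b, (∀ a, B a b = 0) → b = 0) ∧
      ∀ a b, B (F a) b = B a (D b) := by
  set q := Fintype.card Fq with hqdef
  have hq2 : 2 ≤ q := Fintype.one_lt_card
  obtain ⟨E, hE⟩ : ∃ E, q = E + 1 := ⟨q - 1, by omega⟩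
  have hE1 : q - 1 = E := by omega
  obtain ⟨D0, hDd⟩ : ∃ D0, f.natDegree = D0 + 1 := ⟨f.natDegree - 1, by omega⟩
  have hf0 : f ≠ 0 := fun h => by simp [h] at hd
  set lc := f.leadingCoeff with hlcdef
  have hlc0 : lc ≠ 0 := leadingCoeff_ne_zero.mpr hf0
  set g := f * C lc⁻¹ with hgdef
  have hg : g.Monic := monic_mul_leadingCoeff_inv hf0
  have hgd : g.natDegree = D0 + 1 := by
    rw [← hDd]
    exact natDegree_eq_of_degree_eq (degree_mul_leadingCoeff_inv f hf0)
  have hfg : f = g * C lc := by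
    rw [hgdef, mul_assoc, ← C_mul, inv_mul_cancel₀ hlc0, C_1, mul_one]
  have hspan : Ideal.span ({f} : Set Fq[X]) = Ideal.span {g} := by
    apply Ideal.span_singleton_eq_span_singleton.mpr
    have hu : IsUnit (C lc⁻¹ : Fq[X]) :=
      Polynomial.isUnit_C.mpr (isUnit_iff_ne_zero.mpr (inv_ne_zero hlc0))
    exact ⟨hu.unit, by simp [hgdef]⟩
  -- the section operator S
  set S : Fq[X] →ₗ[Fq] Fq[X] := ψ ∘ₗ (Polynomial.hasseDeriv E) with hSdef
  have hS : ∀ (w : Fq[X]) (n : ℕ), (S w).coeff n = w.coeff (q * n + E) := by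
    intro w n
    have h1 : (S w).coeff n = ((Polynomial.hasseDeriv E) w).coeff (q * n) := hψ _ n
    rw [h1, hasseDeriv_coeff]
    have h2 := aux_choose_one (Fq := Fq) n
    rw [← hqdef, hE1] at h2
    rw [h2, one_mul]
  have hq0 : 0 < q := by omega
  -- Frobenius power = expand
  have hpowq : ∀ u : Fq[X], u ^ q = expand Fq q u := fun u => (FiniteField.expand_card u).symm
  have frob : ∀ a b : Fq[X], (a + b) ^ q = a ^ q + b ^ q := by
    intro a b
    rw [hpowq, map_add, ← hpowq, ← hpowq]
  -- S (X^(q*m) * w) = X^m * S w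
  have hS_mul : ∀ (m : ℕ) (w : Fq[X]), S ((X : Fq[X]) ^ (q * m) * w) = X ^ m * S w := by
    intro m w
    ext n
    rw [hS]
    have hl : ((X : Fq[X]) ^ (q * m) * w).coeff (q * n + E)
        = if q * m ≤ q * n + E then w.coeff (q * n + E - q * m) else 0 := by
      rw [mul_comm, coeff_mul_X_pow']
    have hr : ((X : Fq[X]) ^ m * S w).coeff n
        = if m ≤ n then (S w).coeff (n - m) else 0 := by
      rw [mul_comm, coeff_mul_X_pow']
    rw [hl, hr]
    by_cases h : m ≤ n
    · obtain ⟨t, rfl⟩ := Nat.exists_eq_add_of_le h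
      rw [if_pos, if_pos h, hS]
      · congr 1
        have h1 : q * (m + t) + E = q * m + (q * t + E) := by ring
        rw [h1, Nat.add_sub_cancel_left]
        congr 2
        omega
      · have h2 : q * m ≤ q * (m + t) := Nat.mul_le_mul_left _ (by omega)
        omega
    · rw [if_neg h, if_neg]
      intro hcon
      apply h
      by_contra h'
      have h2 : q * (n + 1) ≤ q * m := Nat.mul_le_mul_left _ (by omega)
      have h3 : q * (n + 1) = q * n + q := by ring
      omega
  -- S (u^q * w) = u * S w
  have hS_mulq : ∀ u w : Fq[X], S (u ^ q * w) = u * S w := by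
    intro u w
    rw [hpowq]
    induction u using Polynomial.induction_on' with
    | add p r hp hr => rw [map_add, add_mul, map_add, hp, hr, add_mul]
    | monomial n c =>
      rw [expand_monomial]
      have h1 : (monomial (n * q) c : Fq[X]) * w = C c * ((X : Fq[X]) ^ (q * n) * w) := by
        rw [← C_mul_X_pow_eq_monomial, mul_comm n q, mul_assoc]
      rw [h1, ← smul_eq_C_mul, map_smul, hS_mul, smul_eq_C_mul, ← mul_assoc,
        C_mul_X_pow_eq_monomial]
  -- modByMonic setup
  have hmonicq : (g ^ q).Monic := hg.pow _
  have hgqd : (g ^ q).natDegree = q * (D0 + 1) := by rw [natDegree_pow, hgd]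
  have hgEd : (g ^ E).natDegree = E * (D0 + 1) := by rw [natDegree_pow, hgd]
  have degHelp : ∀ (P : Fq[X]) (n : ℕ), P.natDegree ≤ n → n < q * (D0 + 1) →
      P.degree < (g ^ q).degree := by
    intro P n h1 h2
    have h3 : P.degree ≤ (n : WithBot ℕ) :=
      degree_le_natDegree.trans (by exact_mod_cast h1)
    refine lt_of_le_of_lt h3 ?_
    rw [degree_eq_natDegree hmonicq.ne_zero, hgqd]
    exact_mod_cast h2
  have degHelpg : ∀ (P : Fq[X]) (n : ℕ), P.natDegree ≤ n → n < D0 + 1 →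
      P.degree < g.degree := by
    intro P n h1 h2
    have h3 : P.degree ≤ (n : WithBot ℕ) :=
      degree_le_natDegree.trans (by exact_mod_cast h1)
    refine lt_of_le_of_lt h3 ?_
    rw [degree_eq_natDegree hg.ne_zero, hgd]
    exact_mod_cast h2
  have hrmod : ∀ w : Fq[X], (w %ₘ g).natDegree ≤ D0 := by
    intro w
    by_cases h0 : w %ₘ g = 0
    · simp [h0]
    · have h1 := degree_modByMonic_lt w hg
      have h2 : (w %ₘ g).natDegree < g.natDegree := natDegree_lt_natDegree h0 h1
      omega
  -- Step 1
  have step1 : ∀ w : Fq[X],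
      ((g ^ E * w) %ₘ g ^ q).coeff (q * D0 + E) = (w %ₘ g).coeff D0 := by
    intro w
    have hdecomp : w %ₘ g + g * (w /ₘ g) = w := modByMonic_add_div w g
    have key : (g ^ E * w) %ₘ g ^ q = g ^ E * (w %ₘ g) := by
      refine (div_modByMonic_unique (w /ₘ g) (g ^ E * (w %ₘ g)) hmonicq ⟨?_, ?_⟩).2
      · calc g ^ E * (w %ₘ g) + g ^ q * (w /ₘ g)
            = g ^ E * (w %ₘ g + g * (w /ₘ g)) := by rw [hE]; ring
          _ = g ^ E * w := by rw [hdecomp]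
      · apply degHelp _ (E * (D0 + 1) + D0)
        · exact natDegree_mul_le_of_le hgEd.le (hrmod w)
        · have : q * (D0 + 1) = E * (D0 + 1) + (D0 + 1) := by rw [hE]; ring
          omega
    rw [key]
    have hidx : (g ^ E).natDegree + D0 = q * D0 + E := by rw [hgEd, hE]; ring
    rw [← hidx]
    exact aux_coeff_monic_mul _ _ (hg.pow E) (hrmod w)
  -- Step 2
  have step2 : ∀ w : Fq[X],
      (w %ₘ g ^ q).coeff (q * D0 + E) = ((S w) %ₘ g).coeff D0 := by
    intro w
    induction w using Polynomial.induction_on' with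
    | add p r hp hr => rw [add_modByMonic, map_add, add_modByMonic, coeff_add, coeff_add, hp, hr]
    | monomial j c =>
      suffices H : ((X : Fq[X]) ^ j %ₘ g ^ q).coeff (q * D0 + E)
          = ((S ((X : Fq[X]) ^ j)) %ₘ g).coeff D0 by
        have hsm : (monomial j c : Fq[X]) = c • (X : Fq[X]) ^ j := by
          rw [smul_eq_C_mul, C_mul_X_pow_eq_monomial]
        rw [hsm, smul_modByMonic, coeff_smul, map_smul, smul_modByMonic, coeff_smul, H]
      obtain ⟨k, r, hrlt, rfl⟩ : ∃ k r, r < q ∧ j = q * k + r :=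
        ⟨j / q, j % q, Nat.mod_lt _ hq0, (Nat.div_add_mod j q).symm⟩
      set Rk := (X : Fq[X]) ^ k %ₘ g with hRkdef
      have hkdecomp : Rk + g * ((X : Fq[X]) ^ k /ₘ g) = X ^ k := modByMonic_add_div _ g
      have hmod : (X : Fq[X]) ^ (q * k + r) %ₘ g ^ q = Rk ^ q * X ^ r := by
        refine (div_modByMonic_unique (((X : Fq[X]) ^ k /ₘ g) ^ q * X ^ r) (Rk ^ q * X ^ r)
          hmonicq ⟨?_, ?_⟩).2
        · calc Rk ^ q * X ^ r + g ^ q * (((X : Fq[X]) ^ k /ₘ g) ^ q * X ^ r)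
              = (Rk ^ q + (g * ((X : Fq[X]) ^ k /ₘ g)) ^ q) * X ^ r := by rw [mul_pow]; ring
            _ = ((Rk + g * ((X : Fq[X]) ^ k /ₘ g)) ^ q) * X ^ r := by rw [frob]
            _ = ((X : Fq[X]) ^ k) ^ q * X ^ r := by rw [hkdecomp]
            _ = X ^ (q * k + r) := by rw [← pow_mul, mul_comm k q, ← pow_add]
        · apply degHelp _ (q * D0 + E)
          · refine natDegree_mul_le_of_le ?_ ?_
            · rw [natDegree_pow]
              exact Nat.mul_le_mul_left q (hrmod _)
            · rw [natDegree_X_pow]; omega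
          · have : q * (D0 + 1) = q * D0 + q := by ring
            omega
      rw [hmod, coeff_mul_X_pow', if_pos (by omega), hpowq, coeff_expand hq0]
      by_cases hr : r = E
      · rw [hr, Nat.add_sub_cancel, if_pos ⟨D0, rfl⟩, Nat.mul_div_cancel_left D0 hq0]
        have hSX : S ((X : Fq[X]) ^ (q * k + E)) = X ^ k := by
          have hsplit : (X : Fq[X]) ^ (q * k + E) = X ^ (q * k) * X ^ E := by rw [pow_add]
          rw [hsplit, hS_mul]
          have h3 : S ((X : Fq[X]) ^ E) = 1 := by
            ext n
            rw [hS, coeff_X_pow, coeff_one]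
            by_cases hn : n = 0
            · subst hn; simp
            · rw [if_neg, if_neg hn]
              intro hcon
              have h4 : q * n = 0 := by omega
              rcases Nat.mul_eq_zero.mp h4 with h5 | h5 <;> omega
          rw [h3, mul_one]
        rw [hSX]
      · obtain ⟨s, hs⟩ : ∃ s, E = r + (s + 1) := ⟨E - r - 1, by omega⟩
        have hidx : q * D0 + E - r = q * D0 + (s + 1) := by omega
        rw [hidx, if_neg]
        · have hSX : S ((X : Fq[X]) ^ (q * k + r)) = 0 := by
            ext n
            rw [hS, coeff_X_pow, coeff_zero, if_neg]
            intro hcon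
            have h1 : (q * n + E) % q = E := by
              rw [Nat.mul_add_mod, Nat.mod_eq_of_lt (by omega)]
            have h2 : (q * k + r) % q = r := by
              rw [Nat.mul_add_mod, Nat.mod_eq_of_lt (by omega)]
            rw [hcon, h2] at h1
            omega
          rw [hSX, zero_modByMonic, coeff_zero]
        · intro hdvd
          have h6 : q ∣ (s + 1) := (Nat.dvd_add_right ⟨D0, rfl⟩).mp hdvd
          have h7 := Nat.le_of_dvd (by omega) h6
          omega
  -- the linear functional and the bilinear form
  let ie : AdjoinRoot f ≃ₐ[Fq] AdjoinRoot g := Ideal.quotientEquivAlgOfEq Fq hspan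
  let lam : AdjoinRoot f →ₗ[Fq] Fq :=
    (Polynomial.lcoeff Fq D0) ∘ₗ (AdjoinRoot.modByMonicHom hg) ∘ₗ ie.toLinearMap
  have hlam : ∀ u : Fq[X], lam (AdjoinRoot.mk f u) = (u %ₘ g).coeff D0 := by
    intro u
    show (Polynomial.lcoeff Fq D0) ((AdjoinRoot.modByMonicHom hg) (ie (AdjoinRoot.mk f u))) = _
    have h1 : ie (AdjoinRoot.mk f u) = AdjoinRoot.mk g u :=
      Ideal.quotientEquivAlgOfEq_mk Fq hspan u
    rw [h1, AdjoinRoot.modByMonicHom_mk]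
    rfl
  let B : AdjoinRoot f →ₗ[Fq] AdjoinRoot f →ₗ[Fq] Fq :=
    (LinearMap.mul Fq (AdjoinRoot f)).compr₂ lam
  have hBapp : ∀ a b : AdjoinRoot f, B a b = lam (a * b) := fun a b => rfl
  have hBmk : ∀ u v : Fq[X],
      B (AdjoinRoot.mk f u) (AdjoinRoot.mk f v) = ((u * v) %ₘ g).coeff D0 := by
    intro u v
    rw [hBapp, ← map_mul, hlam]
  have hBsymm : ∀ a b, B a b = B b a := by
    intro a b; rw [hBapp, hBapp, mul_comm]
  have hfdvdg : f ∣ g := ⟨C lc⁻¹, hgdef⟩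
  -- nondegeneracy on the left
  have hnd : ∀ u : Fq[X], (∀ b, B (AdjoinRoot.mk f u) b = 0) → AdjoinRoot.mk f u = 0 := by
    intro u hu
    have hmk0 : AdjoinRoot.mk f (g * (u /ₘ g)) = 0 :=
      AdjoinRoot.mk_eq_zero.mpr (hfdvdg.mul_right _)
    have hmkr : AdjoinRoot.mk f u = AdjoinRoot.mk f (u %ₘ g) := by
      conv_lhs => rw [← modByMonic_add_div u g]
      rw [map_add, hmk0, add_zero]
    set r := u %ₘ g with hrdef
    by_cases h0 : r = 0
    · rw [hmkr, h0, map_zero]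
    · exfalso
      have hrd : r.natDegree ≤ D0 := hrmod u
      have hfin := hu (AdjoinRoot.mk f ((X : Fq[X]) ^ (D0 - r.natDegree)))
      rw [hmkr, hBmk] at hfin
      have hXne : ((X : Fq[X]) ^ (D0 - r.natDegree)) ≠ 0 := pow_ne_zero _ X_ne_zero
      have hdeg2 : (r * (X : Fq[X]) ^ (D0 - r.natDegree)).natDegree = D0 := by
        rw [natDegree_mul h0 hXne, natDegree_X_pow]; omega
      have hself : (r * (X : Fq[X]) ^ (D0 - r.natDegree)) %ₘ g
          = r * (X : Fq[X]) ^ (D0 - r.natDegree) :=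
        (modByMonic_eq_self_iff hg).mpr (degHelpg _ D0 hdeg2.le (by omega))
      rw [hself, coeff_mul_X_pow', if_pos (by omega)] at hfin
      have hidx : D0 - (D0 - r.natDegree) = r.natDegree := by omega
      rw [hidx] at hfin
      exact h0 (leadingCoeff_eq_zero.mp hfin)
  refine ⟨B, ?_, ?_, ?_⟩
  · intro a ha
    obtain ⟨u, rfl⟩ := AdjoinRoot.mk_surjective a
    exact hnd u ha
  · intro b hb
    obtain ⟨u, rfl⟩ := AdjoinRoot.mk_surjective b
    apply hnd u
    intro c
    rw [hBsymm]
    exact hb c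
  · intro a b
    obtain ⟨u, rfl⟩ := AdjoinRoot.mk_surjective a
    obtain ⟨v, rfl⟩ := AdjoinRoot.mk_surjective b
    rw [hF, hD, ← map_pow, hBmk, hBmk]
    have hlcE : lc ^ E = 1 := by
      rw [← hE1]; exact FiniteField.pow_card_sub_one_eq_one lc hlc0
    have hfq : f ^ E = g ^ E := by
      rw [hfg, mul_pow, ← C_pow, hlcE, C_1, mul_one]
    have hSform : ψ ((Polynomial.hasseDeriv (q - 1)) (f ^ (q - 1) * v)) = S (g ^ E * v) := by
      rw [hE1, hfq]; rfl
    rw [hSform]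
    calc ((u ^ q * v) %ₘ g).coeff D0
        = ((g ^ E * (u ^ q * v)) %ₘ g ^ q).coeff (q * D0 + E) := (step1 _).symm
      _ = ((S (g ^ E * (u ^ q * v))) %ₘ g).coeff D0 := step2 _
      _ = ((S (u ^ q * (g ^ E * v))) %ₘ g).coeff D0 := by ring_nf
      _ = ((u * S (g ^ E * v)) %ₘ g).coeff D0 := by rw [hS_mulq]
end

section
/- Let f ∈ F_q[x] be a polynomial of degree d ≥ 1 with f(0) ≠ 0 and let R = F_q[x]/(f). Let F be the F_q-linear endomorphism of R induced by h ↦ h^q, and let G be the F_q-linear endomorphism of R induced by h ↦ ψ_q(f^{q-1}·h). Then there exists a nondegenerate F_q-bilinear form B : R × R → F_q such that B(F(a), b) = B(a, G(b)) for all a, b ∈ R. -/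
open Polynomial

/-- For `f` with `f(0) ≠ 0`, there is a nondegenerate `F_q`-bilinear form on
`R = F_q[x]/(f)` with respect to which the Frobenius `F : h ↦ h^q` and the operator `G`
induced by `h ↦ ψ_q(f^{q-1}·h)` are dual to each other. -/
theorem frobenius_dual_to_G
    (Fq : Type) [Field Fq] [Fintype Fq]
    (ψ : Polynomial Fq →ₗ[Fq] Polynomial Fq)
    (hψ : ∀ (g : Polynomial Fq) (n : ℕ),
      (ψ g).coeff n = g.coeff (Fintype.card Fq * n))
    (f : Polynomial Fq) (hd : 1 ≤ f.natDegree) (h0 : f.eval 0 ≠ 0)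
    (F : AdjoinRoot f →ₗ[Fq] AdjoinRoot f)
    (hF : ∀ y, F y = y ^ Fintype.card Fq)
    (G : AdjoinRoot f →ₗ[Fq] AdjoinRoot f)
    (hG : ∀ h : Polynomial Fq,
      G (AdjoinRoot.mk f h) =
        AdjoinRoot.mk f (ψ (f ^ (Fintype.card Fq - 1) * h))) :
    ∃ B : AdjoinRoot f →ₗ[Fq] AdjoinRoot f →ₗ[Fq] Fq,
      (∀ a, (∀ b, B a b = 0) → a = 0) ∧
      (∀ b, (∀ a, B a b = 0) → b = 0) ∧
      ∀ a b, B (F a) b = B a (G b) := by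
  classical
  have hq1 : 1 < Fintype.card Fq := Fintype.one_lt_card
  have hq0 : 0 < Fintype.card Fq := by omega
  have hf0 : f ≠ 0 := fun h => by simp [h] at h0
  set f' : Polynomial Fq := f * Polynomial.C f.leadingCoeff⁻¹ with hf'def
  have hf'monic : f'.Monic := monic_mul_leadingCoeff_inv hf0
  have hf'0 : f' ≠ 0 := hf'monic.ne_zero
  have hdvd1 : f' ∣ f := by
    refine ⟨Polynomial.C f.leadingCoeff, ?_⟩
    rw [hf'def, mul_assoc, ← Polynomial.C_mul,
      inv_mul_cancel₀ (leadingCoeff_ne_zero.mpr hf0), Polynomial.C_1, mul_one]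
  have hdvd2 : f ∣ f' := Dvd.intro _ rfl
  have hdegf' : f'.degree = f.degree := degree_mul_leadingCoeff_inv f hf0
  -- the linear functional: coeff 0 of the canonical representative
  set M : AdjoinRoot f →ₗ[Fq] Polynomial Fq :=
    (Submodule.liftQ ((Ideal.span {f}).restrictScalars Fq) (Polynomial.modByMonicHom f')
        (fun w hw => (Polynomial.mem_ker_modByMonic hf'monic).mpr
          (hdvd1.trans (Ideal.mem_span_singleton.mp hw)))).comp
      (Submodule.Quotient.restrictScalarsEquiv Fq
        (Ideal.span {f} : Ideal (Polynomial Fq))).symm.toLinearMap with hMdef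
  set ℓ : AdjoinRoot f →ₗ[Fq] Fq := (Polynomial.lcoeff Fq 0).comp M with hldef
  have hlmk : ∀ w : Polynomial Fq, ℓ (AdjoinRoot.mk f w) = (w %ₘ f').coeff 0 := fun w => rfl
  -- the bilinear form
  set B : AdjoinRoot f →ₗ[Fq] AdjoinRoot f →ₗ[Fq] Fq :=
    (LinearMap.mul Fq (AdjoinRoot f)).compr₂ ℓ with hBdef
  have hB : ∀ a b : AdjoinRoot f, B a b = ℓ (a * b) := fun a b => rfl
  -- key semilinearity of ψ
  have hkey : ∀ (g w : Polynomial Fq), ψ (g ^ Fintype.card Fq * w) = g * ψ w := by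
    intro g w
    rw [← FiniteField.expand_card g]
    induction g using Polynomial.induction_on' with
    | add p s hp hs => rw [map_add, add_mul, map_add, hp, hs, add_mul]
    | monomial m c =>
      ext n
      rw [hψ, Polynomial.expand_monomial, ← Polynomial.C_mul_X_pow_eq_monomial,
        ← Polynomial.C_mul_X_pow_eq_monomial, mul_assoc, mul_assoc,
        Polynomial.coeff_C_mul, Polynomial.coeff_C_mul, Polynomial.X_pow_mul,
        Polynomial.X_pow_mul, Polynomial.coeff_mul_X_pow', Polynomial.coeff_mul_X_pow',
        Nat.mul_comm m (Fintype.card Fq)]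
      by_cases hmn : m ≤ n
      · rw [if_pos hmn, if_pos (Nat.mul_le_mul_left _ hmn), hψ]
        congr 2
        obtain ⟨k, rfl⟩ := Nat.exists_eq_add_of_le hmn
        rw [Nat.mul_add, Nat.add_sub_cancel_left, Nat.add_sub_cancel_left]
      · rw [if_neg hmn, if_neg (fun hc => hmn (Nat.le_of_mul_le_mul_left hc hq0)), mul_zero]
  -- nondegeneracy on one side suffices since B is symmetric
  have hnd : ∀ a : AdjoinRoot f, a ≠ 0 → ∃ b, ℓ (a * b) ≠ 0 := by
    intro a ha
    obtain ⟨g, rfl⟩ := AdjoinRoot.mk_surjective a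
    have hmkmod : AdjoinRoot.mk f (g %ₘ f') = AdjoinRoot.mk f g := by
      rw [AdjoinRoot.mk_eq_mk]
      have := modByMonic_add_div g f'
      refine hdvd2.trans ⟨-(g /ₘ f'), ?_⟩
      linear_combination (norm := ring_nf) this
    set g' := g %ₘ f' with hg'def
    have hg'ne : g' ≠ 0 := by
      intro h
      apply ha
      rw [← hmkmod, h, map_zero]
    set c := EuclideanDomain.gcd g' f with hcdef
    have hcne : c ≠ 0 := by
      intro h
      exact hg'ne (EuclideanDomain.gcd_eq_zero_iff.mp h).1
    have hcf : c ∣ f := EuclideanDomain.gcd_dvd_right g' f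
    have hcg : c ∣ g' := EuclideanDomain.gcd_dvd_left g' f
    refine ⟨AdjoinRoot.mk f (EuclideanDomain.gcdA g' f), ?_⟩
    have hbez := EuclideanDomain.gcd_eq_gcd_ab g' f
    have hmk2 : AdjoinRoot.mk f g * AdjoinRoot.mk f (EuclideanDomain.gcdA g' f)
        = AdjoinRoot.mk f c := by
      rw [← hmkmod, ← map_mul, AdjoinRoot.mk_eq_mk]
      refine ⟨-(EuclideanDomain.gcdB g' f), ?_⟩
      rw [← hcdef] at hbez
      linear_combination (norm := ring_nf) -hbez
    rw [hmk2, hlmk]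
    have hdegc : c.degree < f'.degree := by
      calc c.degree ≤ g'.degree := degree_le_of_dvd hcg hg'ne
        _ < f'.degree := degree_modByMonic_lt g hf'monic
    rw [(modByMonic_eq_self_iff hf'monic).mpr hdegc, coeff_zero_eq_eval_zero]
    obtain ⟨t, ht⟩ := hcf
    intro hce
    apply h0
    rw [ht, eval_mul, hce, zero_mul]
  refine ⟨B, ?_, ?_, ?_⟩
  · intro a h
    by_contra ha
    obtain ⟨b, hb⟩ := hnd a ha
    exact hb (by rw [← hB a b]; exact h b)
  · intro b h
    by_contra hb
    obtain ⟨a, hab⟩ := hnd b hb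
    refine hab ?_
    rw [mul_comm, ← hB a b]
    exact h a
  · intro a b
    obtain ⟨g, rfl⟩ := AdjoinRoot.mk_surjective a
    obtain ⟨h, rfl⟩ := AdjoinRoot.mk_surjective b
    set q := Fintype.card Fq with hqdef
    set r := (g ^ q * h) %ₘ f' with hrdef
    have heq : g ^ q * h = f' * ((g ^ q * h) /ₘ f') + r := by
      have := modByMonic_add_div (g ^ q * h) f'
      rw [← hrdef] at this
      linear_combination (norm := ring_nf) -this
    have hL : B (F (AdjoinRoot.mk f g)) (AdjoinRoot.mk f h) = r.coeff 0 := by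
      rw [hF, ← map_pow, hB, ← map_mul, hlmk]
    have hdegr : r.degree < f'.degree := degree_modByMonic_lt _ hf'monic
    -- rewrite the RHS
    have hstep : g * ψ (f ^ (q - 1) * h)
        = f * ψ (Polynomial.C f.leadingCoeff⁻¹ * ((g ^ q * h) /ₘ f')) + ψ (f ^ (q - 1) * r) := by
      rw [← hkey g (f ^ (q - 1) * h)]
      have harr : g ^ q * (f ^ (q - 1) * h)
          = f ^ q * (Polynomial.C f.leadingCoeff⁻¹ * ((g ^ q * h) /ₘ f')) + f ^ (q - 1) * r := by
        have hpow : f ^ (q - 1) * f = f ^ q := by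
          rw [← pow_succ]
          congr 1
          omega
        calc g ^ q * (f ^ (q - 1) * h) = f ^ (q - 1) * (g ^ q * h) := by ring
          _ = f ^ (q - 1) * (f' * ((g ^ q * h) /ₘ f') + r) := by rw [← heq]
          _ = (f ^ (q - 1) * f) * (Polynomial.C f.leadingCoeff⁻¹ * ((g ^ q * h) /ₘ f'))
              + f ^ (q - 1) * r := by rw [hf'def]; ring
          _ = _ := by rw [hpow]
      rw [harr, map_add, hkey f]
    have hsmall : (ψ (f ^ (q - 1) * r)).degree < f'.degree := by
      rw [hdegf', degree_eq_natDegree hf0]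
      rw [degree_lt_iff_coeff_zero]
      intro m hm
      have hm' : f.natDegree ≤ m := by exact_mod_cast hm
      rw [hψ]
      by_cases hr0 : r = 0
      · simp [hr0]
      · apply coeff_eq_zero_of_natDegree_lt
        have h1 : (f ^ (q - 1) * r).natDegree ≤ (q - 1) * f.natDegree + r.natDegree :=
          (natDegree_mul_le).trans (by
            have := natDegree_pow f (q - 1)
            omega)
        have h2 : r.natDegree < f.natDegree := by
          apply natDegree_lt_natDegree hr0
          rw [← hdegf']
          exact hdegr
        have h3 : (q - 1) * f.natDegree + f.natDegree = q * f.natDegree := by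
          have : (q - 1) + 1 = q := by omega
          calc (q - 1) * f.natDegree + f.natDegree = ((q - 1) + 1) * f.natDegree := by ring
            _ = q * f.natDegree := by rw [this]
        have h4 : q * f.natDegree ≤ q * m := Nat.mul_le_mul_left _ hm'
        omega
    have hR : B (AdjoinRoot.mk f g) (G (AdjoinRoot.mk f h)) = r.coeff 0 := by
      rw [hG, hB, ← map_mul, hlmk, hstep]
      have hmoddvd : (f * ψ (Polynomial.C f.leadingCoeff⁻¹ * ((g ^ q * h) /ₘ f'))
          + ψ (f ^ (q - 1) * r)) %ₘ f' = ψ (f ^ (q - 1) * r) := by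
        rw [add_modByMonic, (modByMonic_eq_zero_iff_dvd hf'monic).mpr
            (hdvd1.trans (Dvd.intro _ rfl)), zero_add,
          (modByMonic_eq_self_iff hf'monic).mpr hsmall]
      rw [hmoddvd, hψ, Nat.mul_zero, mul_coeff_zero, coeff_zero_eq_eval_zero, eval_pow,
        FiniteField.pow_card_sub_one_eq_one (f.eval 0) h0, one_mul, coeff_zero_eq_eval_zero]
    rw [hL, hR]
end

section
/- (Proposition 4.1) Let f ∈ F_q[x_1, …, x_n] be a polynomial of total degree at most d. Let ψ_q be the F_q-linear map on F_q[x_1, …, x_n] determined on monomials by ψ_q(x^u) = x^{u/q} if q divides every component of the exponent vector u, and ψ_q(x^u) = 0 otherwise. Let R(d) be the F_q-subspace of F_q[x_1, …, x_n] spanned by the monomials x^u with ∑_i u_i ≤ d and u_i ≥ 1 for all i (i.e., monomials of degree at most d divisible by x_1⋯x_n). Then for every h ∈ R(d), one has ψ_q(f^{q-1}·h) ∈ R(d); that is, the operator ψ_q ∘ f^{q-1} is stable on R(d). -/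
/-- `R(d)`: the `F_q`-subspace of `F_q[x_1, …, x_n]` spanned by the monomials of total
degree at most `d` that are divisible by `x_1⋯x_n`. -/
noncomputable def Rspace (Fq : Type) [Field Fq] (n d : ℕ) :
    Submodule Fq (MvPolynomial (Fin n) Fq) :=
  Submodule.span Fq
    {m | ∃ u : Fin n →₀ ℕ,
      (∑ i, u i) ≤ d ∧ (∀ i, 1 ≤ u i) ∧ m = MvPolynomial.monomial u (1 : Fq)}

lemma mem_Rspace_of_support (Fq : Type) [Field Fq] (n d : ℕ)
    (g : MvPolynomial (Fin n) Fq)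
    (hg : ∀ v ∈ g.support, (∑ i, v i) ≤ d ∧ ∀ i, 1 ≤ v i) :
    g ∈ Rspace Fq n d := by
  rw [← MvPolynomial.support_sum_monomial_coeff g]
  apply Submodule.sum_mem
  intro v hv
  have : (MvPolynomial.monomial v (MvPolynomial.coeff v g))
      = (MvPolynomial.coeff v g) • MvPolynomial.monomial v (1 : Fq) := by
    rw [MvPolynomial.smul_monomial, smul_eq_mul, mul_one]
  rw [this]
  exact Submodule.smul_mem _ _ (Submodule.subset_span
    ⟨v, (hg v hv).1, (hg v hv).2, rfl⟩)

/-- (Proposition 4.1) For `f ∈ F_q[x_1, …, x_n]` of total degree at most `d`, the operator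
`ψ_q ∘ f^{q-1}` is stable on `R(d)`, where `ψ_q` is determined by
`coeff u (ψ_q g) = coeff (q•u) g`. -/
theorem psi_q_mul_pow_stable_on_Rspace
    (Fq : Type) [Field Fq] [Fintype Fq] (n d : ℕ)
    (ψ : MvPolynomial (Fin n) Fq →ₗ[Fq] MvPolynomial (Fin n) Fq)
    (hψ : ∀ (g : MvPolynomial (Fin n) Fq) (u : Fin n →₀ ℕ),
      MvPolynomial.coeff u (ψ g) = MvPolynomial.coeff (Fintype.card Fq • u) g)
    (f : MvPolynomial (Fin n) Fq) (hf : f.totalDegree ≤ d)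
    (h : MvPolynomial (Fin n) Fq) (hh : h ∈ Rspace Fq n d) :
    ψ (f ^ (Fintype.card Fq - 1) * h) ∈ Rspace Fq n d := by
  set q := Fintype.card Fq with hq
  have hq1 : 1 ≤ q := Fintype.card_pos
  induction hh using Submodule.span_induction with
  | mem m hm =>
    obtain ⟨u, hud, hu1, rfl⟩ := hm
    apply mem_Rspace_of_support
    intro v hv
    -- coeff computations
    have hcv : MvPolynomial.coeff v (ψ (f ^ (q - 1) * MvPolynomial.monomial u 1)) ≠ 0 :=
      MvPolynomial.mem_support_iff.mp hv
    rw [hψ, MvPolynomial.coeff_mul_monomial'] at hcv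
    by_cases hle : u ≤ q • v
    · rw [if_pos hle] at hcv
      have hw : (q • v - u) ∈ (f ^ (q - 1)).support := by
        rw [MvPolynomial.mem_support_iff]
        intro h0
        rw [h0, zero_mul] at hcv
        exact hcv rfl
      have hdeg : ((q • v - u).sum fun _ e => e) ≤ (q - 1) * d := by
        calc ((q • v - u).sum fun _ e => e) ≤ (f ^ (q - 1)).totalDegree :=
              MvPolynomial.le_totalDegree hw
          _ ≤ (q - 1) * f.totalDegree := MvPolynomial.totalDegree_pow f (q - 1)
          _ ≤ (q - 1) * d := Nat.mul_le_mul_left _ hf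
      have hsum : ∀ w : Fin n →₀ ℕ, (w.sum fun _ e => e) = ∑ i, w i := by
        intro w
        rw [Finsupp.sum_fintype]
        intro i; rfl
      have hadd : (q • v - u) + u = q • v := tsub_add_cancel_of_le hle
      have hsv : q * ∑ i, v i ≤ q * d := by
        have h1 : ∑ i, (q • v) i = (∑ i, (q • v - u) i) + ∑ i, u i := by
          rw [← Finset.sum_add_distrib]
          refine Finset.sum_congr rfl fun i _ => ?_
          rw [← Finsupp.add_apply, hadd]
        have h2 : ∑ i, (q • v) i = q * ∑ i, v i := by
          rw [Finset.mul_sum]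
          refine Finset.sum_congr rfl fun i _ => ?_
          rw [Finsupp.smul_apply, smul_eq_mul]
        have h3 : (∑ i, (q • v - u) i) ≤ (q - 1) * d := by
          rw [← hsum]; exact hdeg
        calc q * ∑ i, v i = (∑ i, (q • v - u) i) + ∑ i, u i := by rw [← h2, h1]
          _ ≤ (q - 1) * d + d := Nat.add_le_add h3 hud
          _ = q * d := by
            rw [Nat.sub_one_mul, Nat.sub_add_cancel (Nat.le_mul_of_pos_left d hq1)]
      constructor
      · exact Nat.le_of_mul_le_mul_left hsv hq1
      · intro i
        have hui := hu1 i
        have hlei := hle i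
        by_contra h0
        push_neg at h0
        have hv0 : v i = 0 := by omega
        have : (q • v) i = 0 := by rw [Finsupp.smul_apply, hv0, smul_zero]
        omega
    · rw [if_neg hle] at hcv
      exact absurd rfl hcv
  | zero => rw [mul_zero, map_zero]; exact Submodule.zero_mem _
  | add a b _ _ ha hb =>
    rw [mul_add, map_add]; exact Submodule.add_mem _ ha hb
  | smul c a _ ha =>
    rw [mul_smul_comm, map_smul]; exact Submodule.smul_mem _ _ ha
end
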